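/- arXiv:2003.02687 — 6 statements merged into one kernel-verified Lean document; each statement's English description precedes it below -/
import Mathlib

section
/- Let G be a finite simple graph and let t be an integer with 1 ≤ t ≤ χ_DP(G). Then α_t^{DP}(G) ≥ |V(G)| / ⌈χ_DP(G)/t⌉. -/
open SimpleGraph

/-- `DPCover G H L` means `(L, H)` is a cover of the graph `G`:
(1) the sets `L u` partition `V(H)`; (2) each `H[L u]` is complete;
(3) for each edge `uv` of `G`, the edges of `H` between `L u` and `L v` form a matching;
(4) there are no edges of `H` between lists of distinct non-adjacent vertices. -/
structure DPCover {V : Type} (G : SimpleGraph V) {W : Type} (H : SimpleGraph W)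
    (L : V → Finset W) : Prop where
  partition : ∀ w : W, ∃! v : V, w ∈ L v
  cliques : ∀ v : V, ∀ a ∈ L v, ∀ b ∈ L v, a ≠ b → H.Adj a b
  matching : ∀ ⦃u v : V⦄, G.Adj u v → ∀ a ∈ L u, ∀ b ∈ L v, ∀ b' ∈ L v,
      H.Adj a b → H.Adj a b' → b = b'
  nonadj : ∀ ⦃u v : V⦄, u ≠ v → ¬ G.Adj u v → ∀ a ∈ L u, ∀ b ∈ L v, ¬ H.Adj a b

/-- A finset is independent in `H` if no two of its elements are adjacent. -/
def IsIndepFinset {W : Type} (H : SimpleGraph W) (S : Finset W) : Prop :=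
  ∀ a ∈ S, ∀ b ∈ S, ¬ H.Adj a b

/-- The independence number of `H`. -/
noncomputable def indepNum {W : Type} [Fintype W] (H : SimpleGraph W) : ℕ :=
  sSup {n : ℕ | ∃ S : Finset W, IsIndepFinset H S ∧ S.card = n}

/-- The DP-chromatic number of `G`: the least `m` such that every `m`-fold cover `(L, H)`
of `G` admits an `H`-coloring, i.e. an independent set in `H` of size `|V(G)|`. -/
noncomputable def chiDP {V : Type} [Fintype V] (G : SimpleGraph V) : ℕ :=
  sInf {m : ℕ | ∀ (W : Type) (_ : Fintype W) (H : SimpleGraph W) (L : V → Finset W),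
    DPCover G H L → (∀ v, (L v).card = m) →
    ∃ S : Finset W, IsIndepFinset H S ∧ S.card = Fintype.card V}

/-- The partial DP `t`-chromatic number of `G`: the minimum of the independence number
`α(H)` over all `t`-fold covers `(L, H)` of `G`. -/
noncomputable def alphaDP {V : Type} [Fintype V] (G : SimpleGraph V) (t : ℕ) : ℕ :=
  sInf {n : ℕ | ∃ (W : Type) (_ : Fintype W) (H : SimpleGraph W) (L : V → Finset W),
    DPCover G H L ∧ (∀ v, (L v).card = t) ∧ _root_.indepNum H = n}

/-- A graph `G` is partially DP-nice if `α_t^{DP}(G) ≥ t|V(G)|/χ_DP(G)` for all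
`t ∈ {1, …, χ_DP(G)}`. -/
def PartiallyDPNice {V : Type} [Fintype V] (G : SimpleGraph V) : Prop :=
  ∀ t : ℕ, 1 ≤ t → t ≤ chiDP G →
    (t * Fintype.card V : ℚ) / (chiDP G : ℚ) ≤ (alphaDP G t : ℚ)

-- trivial cover exists
lemma exists_tfold_cover {V : Type} [Fintype V] (G : SimpleGraph V) (t : ℕ) :
    ∃ (W : Type) (_ : Fintype W) (H : SimpleGraph W) (L : V → Finset W),
      DPCover G H L ∧ (∀ v, (L v).card = t) := by
  classical
  refine ⟨V × Fin t, inferInstance, SimpleGraph.fromRel (fun a b => a.1 = b.1),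
    fun v => {v} ×ˢ Finset.univ, ⟨?_, ?_, ?_, ?_⟩, ?_⟩
  · intro w
    refine ⟨w.1, by simp only [Finset.mem_product, Finset.mem_singleton, Finset.mem_univ, and_true], ?_⟩
    intro v hv
    simp only [Finset.mem_product, Finset.mem_singleton, Finset.mem_univ, and_true] at hv
    exact hv.symm
  · intro v a ha b hb hne
    simp only [Finset.mem_product, Finset.mem_singleton, Finset.mem_univ, and_true] at ha hb
    simp [SimpleGraph.fromRel_adj, hne, ha, hb]
  · intro u v huv a ha b hb b' hb' hab hab'
    exfalso
    simp only [Finset.mem_product, Finset.mem_singleton, Finset.mem_univ, and_true] at ha hb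
    simp only [SimpleGraph.fromRel_adj] at hab
    rcases hab.2 with h | h
    · exact huv.ne (by rw [← ha, ← hb]; exact h)
    · exact huv.ne (by rw [← ha, ← hb]; exact h.symm)
  · intro u v hne hnadj a ha b hb hab
    simp only [Finset.mem_product, Finset.mem_singleton, Finset.mem_univ, and_true] at ha hb
    simp only [SimpleGraph.fromRel_adj] at hab
    rcases hab.2 with h | h
    · exact hne (by rw [← ha, ← hb]; exact h)
    · exact hne (by rw [← ha, ← hb]; exact h.symm)
  · intro v; simp

lemma card_le_mul_indepNum {V : Type} [Fintype V] (G : SimpleGraph V)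
    {W : Type} [Fintype W] (H : SimpleGraph W) (L : V → Finset W)
    (hc : DPCover G H L) {t k : ℕ} (ht : ∀ v, (L v).card = t)
    (hk : 0 < k) (hkt : chiDP G ≤ t * k) (hχpos : 0 < chiDP G) :
    Fintype.card V ≤ k * _root_.indepNum H := by
  classical
  -- the list-assignment function
  set ℓ : W → V := fun w => (hc.partition w).choose with hℓdef
  have hℓ : ∀ w, w ∈ L (ℓ w) := fun w => (hc.partition w).choose_spec.1
  have huniq : ∀ {w v}, w ∈ L v → ℓ w = v :=
    fun {w v} h => ((hc.partition w).choose_spec.2 v h).symm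
  -- k disjoint copies of H, lists made into cliques
  set H' : SimpleGraph (W × Fin k) :=
    SimpleGraph.fromRel (fun a b => ℓ a.1 = ℓ b.1 ∨ (a.2 = b.2 ∧ H.Adj a.1 b.1)) with hH'def
  have hadj : ∀ a b : W × Fin k,
      H'.Adj a b ↔ a ≠ b ∧ (ℓ a.1 = ℓ b.1 ∨ (a.2 = b.2 ∧ H.Adj a.1 b.1)) := by
    intro a b
    simp only [hH'def, SimpleGraph.fromRel_adj]
    constructor
    · rintro ⟨hne, h | h⟩
      · exact ⟨hne, h⟩
      · rcases h with h | ⟨h1, h2⟩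
        · exact ⟨hne, Or.inl h.symm⟩
        · exact ⟨hne, Or.inr ⟨h1.symm, h2.symm⟩⟩
    · rintro ⟨hne, h⟩
      exact ⟨hne, Or.inl h⟩
  set L' : V → Finset (W × Fin k) := fun v => L v ×ˢ Finset.univ with hL'def
  have hL'mem : ∀ (v) (x : W × Fin k), x ∈ L' v ↔ x.1 ∈ L v := by
    intro v x
    simp [hL'def, Finset.mem_product]
  have hL'card : ∀ v, (L' v).card = t * k := by
    intro v; simp [hL'def, ht v]
  have cover' : DPCover G H' L' := by
    constructor
    · intro x
      refine ⟨ℓ x.1, (hL'mem _ x).2 (hℓ x.1), ?_⟩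
      intro v hv
      exact (huniq ((hL'mem v x).1 hv)).symm
    · intro v a ha b hb hne
      rw [hL'mem] at ha hb
      exact (hadj a b).2 ⟨hne, Or.inl (by rw [huniq ha, huniq hb])⟩
    · intro u v huv a ha b hb b' hb' hab hab'
      rw [hL'mem] at ha hb hb'
      rw [hadj] at hab hab'
      have hne : u ≠ v := huv.ne
      rcases hab.2 with h | ⟨h1, h2⟩
      · exact absurd (by rw [huniq ha, huniq hb] at h; exact h) hne
      rcases hab'.2 with h' | ⟨h1', h2'⟩
      · exact absurd (by rw [huniq ha, huniq hb'] at h'; exact h') hne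
      have : b.1 = b'.1 := hc.matching huv a.1 ha b.1 hb b'.1 hb' h2 h2'
      exact Prod.ext this (h1.symm.trans h1')
    · intro u v hne hnadj a ha b hb hab
      rw [hL'mem] at ha hb
      rw [hadj] at hab
      rcases hab.2 with h | ⟨h1, h2⟩
      · exact hne (by rw [huniq ha, huniq hb] at h; exact h)
      · exact hc.nonadj hne hnadj a.1 ha b.1 hb h2
  -- restrict to a (chiDP G)-fold subcover
  have hsub : ∀ v, ∃ M ⊆ L' v, M.card = chiDP G := by
    intro v
    exact Finset.exists_subset_card_eq (by rw [hL'card]; exact hkt)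
  choose M hMsub hMcard using hsub
  set S : Finset (W × Fin k) := Finset.univ.biUnion M with hSdef
  haveI : Fintype {x : W × Fin k // x ∈ S} := FinsetCoe.fintype S
  set H₀ : SimpleGraph {x : W × Fin k // x ∈ S} := H'.comap Subtype.val with hH₀def
  have hembinj : ∀ v, Function.Injective
      (fun (x : {a // a ∈ M v}) =>
        (⟨x.1, Finset.mem_biUnion.2 ⟨v, Finset.mem_univ v, x.2⟩⟩ : {x : W × Fin k // x ∈ S})) := by
    intro v x y h
    have h2 := congrArg Subtype.val h
    exact Subtype.ext h2
  set L₀ : V → Finset {x : W × Fin k // x ∈ S} := fun v =>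
    (M v).attach.map ⟨_, hembinj v⟩ with hL₀def
  have hL₀mem : ∀ (v) (y : {x : W × Fin k // x ∈ S}), y ∈ L₀ v ↔ y.1 ∈ M v := by
    intro v y
    simp only [hL₀def, Finset.mem_map, Finset.mem_attach, true_and, Function.Embedding.coeFn_mk]
    constructor
    · rintro ⟨x, rfl⟩; exact x.2
    · intro h; exact ⟨⟨y.1, h⟩, Subtype.ext rfl⟩
  have hL₀card : ∀ v, (L₀ v).card = chiDP G := by
    intro v; simp [hL₀def, hMcard]
  have cover₀ : DPCover G H₀ L₀ := by
    constructor
    · intro y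
      obtain ⟨v, _, hv⟩ := Finset.mem_biUnion.1 y.2
      refine ⟨v, (hL₀mem v y).2 hv, ?_⟩
      intro v' hv'
      have h1 : y.1 ∈ L' v' := hMsub v' ((hL₀mem v' y).1 hv')
      have h2 : y.1 ∈ L' v := hMsub v hv
      rw [← huniq ((hL'mem _ _).1 h1), ← huniq ((hL'mem _ _).1 h2)]
    · intro v a ha b hb hne
      exact cover'.cliques v a.1 (hMsub v ((hL₀mem v a).1 ha)) b.1 (hMsub v ((hL₀mem v b).1 hb))
        (fun h => hne (Subtype.ext h))
    · intro u v huv a ha b hb b' hb' hab hab'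
      exact Subtype.ext (cover'.matching huv a.1 (hMsub u ((hL₀mem u a).1 ha))
        b.1 (hMsub v ((hL₀mem v b).1 hb)) b'.1 (hMsub v ((hL₀mem v b').1 hb')) hab hab')
    · intro u v hne hnadj a ha b hb
      exact cover'.nonadj hne hnadj a.1 (hMsub u ((hL₀mem u a).1 ha))
        b.1 (hMsub v ((hL₀mem v b).1 hb))
  -- apply the definition of chiDP
  have hmem : chiDP G ∈ {m : ℕ | ∀ (W : Type) (_ : Fintype W) (H : SimpleGraph W)
      (L : V → Finset W), DPCover G H L → (∀ v, (L v).card = m) →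
      ∃ S : Finset W, IsIndepFinset H S ∧ S.card = Fintype.card V} :=
    Nat.sInf_mem (Nat.nonempty_of_pos_sInf hχpos)
  obtain ⟨S₀, hS₀ind, hS₀card⟩ := hmem _ inferInstance H₀ L₀ cover₀ hL₀card
  set T : Finset (W × Fin k) := S₀.image Subtype.val with hTdef
  have hTcard : T.card = Fintype.card V := by
    rw [hTdef, Finset.card_image_of_injective _ Subtype.val_injective, hS₀card]
  have hTind : IsIndepFinset H' T := by
    intro a ha b hb hab
    obtain ⟨a₀, ha₀, rfl⟩ := Finset.mem_image.1 ha
    obtain ⟨b₀, hb₀, rfl⟩ := Finset.mem_image.1 hb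
    exact hS₀ind a₀ ha₀ b₀ hb₀ hab
  -- pigeonhole over the k copies
  have hsum : T.card = ∑ i : Fin k, (T.filter (fun x => x.2 = i)).card :=
    Finset.card_eq_sum_card_fiberwise (fun x _ => Finset.mem_univ x.2)
  set f : Fin k → ℕ := fun j => (T.filter (fun x => x.2 = j)).card with hfdef
  obtain ⟨i, _, hi⟩ := Finset.exists_max_image Finset.univ f ⟨⟨0, hk⟩, Finset.mem_univ _⟩
  have hpig : T.card ≤ k * (T.filter (fun x => x.2 = i)).card := by
    rw [hsum]
    calc ∑ j : Fin k, (T.filter (fun x => x.2 = j)).card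
        ≤ Finset.univ.card • (T.filter (fun x => x.2 = i)).card :=
          Finset.sum_le_card_nsmul _ _ _ (fun j _ => hi j (Finset.mem_univ j))
      _ = k * (T.filter (fun x => x.2 = i)).card := by
          simp [Finset.card_univ, smul_eq_mul]
  set A : Finset W := (T.filter (fun x => x.2 = i)).image Prod.fst with hAdef
  have hAcard : A.card = (T.filter (fun x => x.2 = i)).card := by
    rw [hAdef]
    apply Finset.card_image_of_injOn
    intro x hx y hy hxy
    simp only [Finset.mem_coe, Finset.mem_filter] at hx hy
    exact Prod.ext hxy (hx.2.trans hy.2.symm)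
  have hAind : IsIndepFinset H A := by
    intro a ha b hb hab
    obtain ⟨x, hx, rfl⟩ := Finset.mem_image.1 ha
    obtain ⟨y, hy, rfl⟩ := Finset.mem_image.1 hb
    rw [Finset.mem_filter] at hx hy
    have hne : x ≠ y := fun h => hab.ne (congrArg Prod.fst h)
    exact hTind x hx.1 y hy.1 ((hadj x y).2 ⟨hne, Or.inr ⟨hx.2.trans hy.2.symm, hab⟩⟩)
  have hAle : A.card ≤ _root_.indepNum H := by
    have hbdd : BddAbove {n : ℕ | ∃ S : Finset W, IsIndepFinset H S ∧ S.card = n} := by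
      refine ⟨Fintype.card W, ?_⟩
      rintro n ⟨S, -, rfl⟩
      exact Finset.card_le_univ S
    exact le_csSup hbdd ⟨A, hAind, rfl⟩
  calc Fintype.card V = T.card := hTcard.symm
    _ ≤ k * (T.filter (fun x => x.2 = i)).card := hpig
    _ = k * A.card := by rw [hAcard]
    _ ≤ k * _root_.indepNum H := Nat.mul_le_mul_left k hAle

/-- For any graph `G` and `t ∈ {1, …, χ_DP(G)}`,
`α_t^{DP}(G) ≥ |V(G)| / ⌈χ_DP(G)/t⌉`. -/
theorem alphaDP_ge_card_div_ceil {V : Type} [Fintype V] (G : SimpleGraph V)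
    (t : ℕ) (h1 : 1 ≤ t) (h2 : t ≤ chiDP G) :
    (Fintype.card V : ℚ) / (⌈(chiDP G : ℚ) / (t : ℚ)⌉ : ℚ) ≤ (alphaDP G t : ℚ) := by
  have hχpos : 0 < chiDP G := lt_of_lt_of_le h1 h2
  have htpos : (0 : ℚ) < t := by exact_mod_cast h1
  have hceil_pos : 0 < ⌈(chiDP G : ℚ) / (t : ℚ)⌉ :=
    Int.ceil_pos.2 (div_pos (by exact_mod_cast hχpos) htpos)
  set k : ℕ := (⌈(chiDP G : ℚ) / (t : ℚ)⌉).toNat with hkdef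
  have hkcast : (k : ℤ) = ⌈(chiDP G : ℚ) / (t : ℚ)⌉ := Int.toNat_of_nonneg hceil_pos.le
  have hkQ : (k : ℚ) = (⌈(chiDP G : ℚ) / (t : ℚ)⌉ : ℚ) := by exact_mod_cast hkcast
  have hk : 0 < k := by
    have : (0 : ℤ) < (k : ℤ) := hkcast ▸ hceil_pos
    exact_mod_cast this
  have hktQ : (chiDP G : ℚ) ≤ (t : ℚ) * (k : ℚ) := by
    have h := Int.le_ceil ((chiDP G : ℚ) / (t : ℚ))
    rw [← hkQ] at h
    calc (chiDP G : ℚ) = ((chiDP G : ℚ) / t) * t := by field_simp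
      _ ≤ (k : ℚ) * t := mul_le_mul_of_nonneg_right h htpos.le
      _ = (t : ℚ) * k := mul_comm _ _
  have hkt : chiDP G ≤ t * k := by exact_mod_cast hktQ
  obtain ⟨W, iW, H, L, hc, ht⟩ := exists_tfold_cover G t
  have hne : {n : ℕ | ∃ (W : Type) (_ : Fintype W) (H : SimpleGraph W) (L : V → Finset W),
      DPCover G H L ∧ (∀ v, (L v).card = t) ∧ _root_.indepNum H = n}.Nonempty :=
    ⟨@_root_.indepNum W iW H, W, iW, H, L, hc, ht, rfl⟩
  obtain ⟨W', iW', H', L', hc', ht', hn⟩ := Nat.sInf_mem hne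
  have hn' : @_root_.indepNum W' iW' H' = alphaDP G t := hn
  have key := @card_le_mul_indepNum V _ G W' iW' H' L' hc' t k ht' hk hkt hχpos
  rw [hn'] at key
  rw [div_le_iff₀ (by rw [← hkQ]; exact_mod_cast hk), ← hkQ]
  calc (Fintype.card V : ℚ) ≤ ((k * alphaDP G t : ℕ) : ℚ) := by exact_mod_cast key
    _ = (alphaDP G t : ℚ) * k := by push_cast; ring
end

section
/- Let G be a finite simple graph. The number of integers t with 1 ≤ t ≤ χ_DP(G) − 1 that satisfy α_t^{DP}(G) ≥ t·|V(G)|/χ_DP(G) is at least ⌈(χ_DP(G) − 1)/2⌉, i.e., the inequality holds for at least half of the values of t in {1, …, χ_DP(G) − 1}. -/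
open SimpleGraph

/-! ### Auxiliary lemmas -/

lemma card_le_indepNum {W : Type} [Fintype W] (H : SimpleGraph W) {S : Finset W}
    (h : IsIndepFinset H S) : S.card ≤ _root_.indepNum H := by
  apply le_csSup
  · exact ⟨Fintype.card W, by rintro n ⟨T, -, rfl⟩; exact T.card_le_univ⟩
  · exact ⟨S, h, rfl⟩

/-- The trivial `t`-fold cover: `V × Fin t` with cliques over each vertex. -/
def trivH (V : Type) (t : ℕ) : SimpleGraph (V × Fin t) :=
  SimpleGraph.fromRel (fun a b => a.1 = b.1)

def trivL (V : Type) (t : ℕ) : V → Finset (V × Fin t) :=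
  fun v => Finset.univ.map ⟨fun i => (v, i), fun i j h => by simpa using h⟩

lemma mem_trivL {V : Type} {t : ℕ} {v : V} {a : V × Fin t} :
    a ∈ trivL V t v ↔ a.1 = v := by
  simp only [trivL, Finset.mem_map, Finset.mem_univ, Function.Embedding.coeFn_mk, true_and]
  constructor
  · rintro ⟨i, rfl⟩; rfl
  · rintro rfl; exact ⟨a.2, rfl⟩

lemma trivCover {V : Type} (G : SimpleGraph V) (t : ℕ) :
    DPCover G (trivH V t) (trivL V t) := by
  constructor
  · intro w
    exact ⟨w.1, mem_trivL.2 rfl, fun v hv => (mem_trivL.1 hv).symm⟩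
  · intro v a ha b hb hab
    exact ⟨hab, Or.inl ((mem_trivL.1 ha).trans (mem_trivL.1 hb).symm)⟩
  · intro u v huv a ha b hb b' hb' hadj _
    exfalso
    rcases hadj with ⟨-, h | h⟩
    · exact huv.ne (((mem_trivL.1 ha).symm.trans h).trans (mem_trivL.1 hb))
    · exact huv.ne (((mem_trivL.1 ha).symm.trans h.symm).trans (mem_trivL.1 hb))
  · intro u v huv _ a ha b hb hadj
    rcases hadj with ⟨-, h | h⟩
    · exact huv (((mem_trivL.1 ha).symm.trans h).trans (mem_trivL.1 hb))
    · exact huv (((mem_trivL.1 ha).symm.trans h.symm).trans (mem_trivL.1 hb))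

lemma trivL_card {V : Type} (t : ℕ) (v : V) : (trivL V t v).card = t := by
  simp [trivL]

lemma alphaDP_set_nonempty {V : Type} [Fintype V] (G : SimpleGraph V) (t : ℕ) :
    {n : ℕ | ∃ (W : Type) (_ : Fintype W) (H : SimpleGraph W) (L : V → Finset W),
      DPCover G H L ∧ (∀ v, (L v).card = t) ∧ _root_.indepNum H = n}.Nonempty :=
  ⟨_, V × Fin t, inferInstance, trivH V t, trivL V t, trivCover G t, trivL_card t, rfl⟩

/-- Greedy: any cover with lists of size `≥ |V|` has an independent transversal. -/
lemma greedy_aux {V W : Type} [Fintype V] (G : SimpleGraph V) (H : SimpleGraph W)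
    (L : V → Finset W) (hC : DPCover G H L)
    (hcard : ∀ v, Fintype.card V ≤ (L v).card) (T : Finset V) :
    ∃ S : Finset W, IsIndepFinset H S ∧ S.card = T.card ∧
      ∀ w ∈ S, ∃ v ∈ T, w ∈ L v := by
  classical
  induction T using Finset.induction_on with
  | empty => exact ⟨∅, by simp [IsIndepFinset], by simp, by simp⟩
  | @insert v T hvT ih =>
    obtain ⟨S, hSind, hScard, hSmem⟩ := ih
    -- forbidden elements of L v
    set F : Finset W := (L v).filter (fun a => ∃ w ∈ S, H.Adj w a) with hF
    have hg : ∀ w ∈ S, ∀ a ∈ F, H.Adj w a → ∀ a' ∈ F, H.Adj w a' → a = a' := by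
      intro w hw a ha hwa a' ha' hwa'
      obtain ⟨u, hu, hwu⟩ := hSmem w hw
      have haL : a ∈ L v := (Finset.mem_filter.1 ha).1
      have ha'L : a' ∈ L v := (Finset.mem_filter.1 ha').1
      have huv : u ≠ v := fun h => hvT (h ▸ hu)
      by_cases hadj : G.Adj u v
      · exact hC.matching hadj w hwu a haL a' ha'L hwa hwa'
      · exact absurd hwa (hC.nonadj huv hadj w hwu a haL)
    have hFcard : F.card ≤ S.card := by
      have hex : ∀ a : W, a ∈ F → ∃ w, w ∈ S ∧ H.Adj w a := by
        intro a ha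
        obtain ⟨w, hw, hwa⟩ := (Finset.mem_filter.1 ha).2
        exact ⟨w, hw, hwa⟩
      choose wit hwit1 hwit2 using hex
      apply Finset.card_le_card_of_injOn
        (fun a => if h : a ∈ F then wit a h else Classical.choice ⟨a⟩)
      · intro a ha
        have ha : a ∈ F := Finset.mem_coe.1 ha
        simp only [ha, dif_pos]
        exact hwit1 a ha
      · intro a ha' a' ha'' heq
        have ha : a ∈ F := Finset.mem_coe.1 ha'
        have ha2 : a' ∈ F := Finset.mem_coe.1 ha''
        simp only [ha, ha2, dif_pos] at heq
        exact hg (wit a ha) (hwit1 a ha) a ha (hwit2 a ha) a' ha2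
          (by rw [heq]; exact hwit2 a' ha2)
    have hlt : F.card < (L v).card := by
      have h1 : (insert v T).card ≤ Fintype.card V := Finset.card_le_univ _
      have h2 : (insert v T).card = T.card + 1 := Finset.card_insert_of_notMem hvT
      have h3 := hcard v
      omega
    obtain ⟨a, haL, haF⟩ : ∃ a ∈ L v, a ∉ F := by
      by_contra hcon
      push_neg at hcon
      exact absurd (Finset.card_le_card (fun a ha => hcon a ha)) (not_le.2 hlt)
    have haS : a ∉ S := by
      intro haS
      obtain ⟨u, hu, hau⟩ := hSmem a haS
      exact hvT (((hC.partition a).unique hau haL : u = v) ▸ hu)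
    have hanoadj : ∀ w ∈ S, ¬ H.Adj w a := by
      intro w hw hadj
      exact haF (Finset.mem_filter.2 ⟨haL, w, hw, hadj⟩)
    refine ⟨insert a S, ?_, ?_, ?_⟩
    · intro x hx y hy hxy
      rcases Finset.mem_insert.1 hx with hx | hx
      · rcases Finset.mem_insert.1 hy with hy | hy
        · rw [hx, hy] at hxy; exact H.loopless.irrefl a hxy
        · rw [hx] at hxy; exact hanoadj y hy hxy.symm
      · rcases Finset.mem_insert.1 hy with hy | hy
        · rw [hy] at hxy; exact hanoadj x hx hxy
        · exact hSind x hx y hy hxy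
    · rw [Finset.card_insert_of_notMem haS, Finset.card_insert_of_notMem hvT, hScard]
    · intro w hw
      rcases Finset.mem_insert.1 hw with rfl | hw
      · exact ⟨v, Finset.mem_insert_self v T, haL⟩
      · obtain ⟨u, hu, hwu⟩ := hSmem w hw
        exact ⟨u, Finset.mem_insert_of_mem hu, hwu⟩

/-- `|V|` belongs to the defining set of `chiDP`. -/
lemma chiDP_set_nonempty {V : Type} [Fintype V] (G : SimpleGraph V) :
    {m : ℕ | ∀ (W : Type) (_ : Fintype W) (H : SimpleGraph W) (L : V → Finset W),
      DPCover G H L → (∀ v, (L v).card = m) →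
      ∃ S : Finset W, IsIndepFinset H S ∧ S.card = Fintype.card V}.Nonempty := by
  refine ⟨Fintype.card V, fun W _ H L hC hcard => ?_⟩
  obtain ⟨S, h1, h2, -⟩ := greedy_aux G H L hC (fun v => (hcard v).ge) Finset.univ
  exact ⟨S, h1, by rw [h2, Finset.card_univ]⟩

/-! ### Sum of two covers -/

section SumCover

variable {V W1 W2 : Type} (G : SimpleGraph V)
variable (H1 : SimpleGraph W1) (H2 : SimpleGraph W2)
variable (L1 : V → Finset W1) (L2 : V → Finset W2)

/-- Sum of two covers: disjoint union, joined within each vertex's list. -/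
def sumH : SimpleGraph (W1 ⊕ W2) where
  Adj x y := match x, y with
    | .inl a, .inl b => H1.Adj a b
    | .inr a, .inr b => H2.Adj a b
    | .inl a, .inr b => ∃ v, a ∈ L1 v ∧ b ∈ L2 v
    | .inr a, .inl b => ∃ v, b ∈ L1 v ∧ a ∈ L2 v
  symm := by
    constructor
    rintro (a | a) (b | b) h
    · exact h.symm
    · exact h
    · exact h
    · exact h.symm
  loopless := by
    constructor
    rintro (a | a) h
    · exact H1.loopless.irrefl a h
    · exact H2.loopless.irrefl a h

def sumL : V → Finset (W1 ⊕ W2) := fun v => (L1 v).disjSum (L2 v)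

lemma sumCover (hC1 : DPCover G H1 L1) (hC2 : DPCover G H2 L2) :
    DPCover G (sumH H1 H2 L1 L2) (sumL L1 L2) := by
  constructor
  · rintro (a | a)
    · obtain ⟨v, hv, huniq⟩ := hC1.partition a
      refine ⟨v, Finset.inl_mem_disjSum.2 hv, fun u hu => ?_⟩
      exact huniq u (Finset.inl_mem_disjSum.1 hu)
    · obtain ⟨v, hv, huniq⟩ := hC2.partition a
      refine ⟨v, Finset.inr_mem_disjSum.2 hv, fun u hu => ?_⟩
      exact huniq u (Finset.inr_mem_disjSum.1 hu)
  · rintro v (a | a) ha (b | b) hb hab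
    · exact hC1.cliques v a (Finset.inl_mem_disjSum.1 ha) b (Finset.inl_mem_disjSum.1 hb)
        (fun h => hab (h ▸ rfl))
    · exact ⟨v, Finset.inl_mem_disjSum.1 ha, Finset.inr_mem_disjSum.1 hb⟩
    · exact ⟨v, Finset.inl_mem_disjSum.1 hb, Finset.inr_mem_disjSum.1 ha⟩
    · exact hC2.cliques v a (Finset.inr_mem_disjSum.1 ha) b (Finset.inr_mem_disjSum.1 hb)
        (fun h => hab (h ▸ rfl))
  · rintro u v huv (a | a) ha (b | b) hb (b' | b') hb' hab hab'
    -- case lll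
    · exact congrArg Sum.inl (hC1.matching huv a (Finset.inl_mem_disjSum.1 ha)
        b (Finset.inl_mem_disjSum.1 hb) b' (Finset.inl_mem_disjSum.1 hb') hab hab')
    -- case llr : hab' : ∃ x, a ∈ L1 x ∧ b' ∈ L2 x
    · obtain ⟨x, hx1, hx2⟩ := hab'
      have h1 : x = u := (hC1.partition a).unique hx1 (Finset.inl_mem_disjSum.1 ha)
      have h2 : x = v := (hC2.partition b').unique hx2 (Finset.inr_mem_disjSum.1 hb')
      exact absurd (h1.symm.trans h2) huv.ne
    -- case lrl : hab : ∃ x, a ∈ L1 x ∧ b ∈ L2 x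
    · obtain ⟨x, hx1, hx2⟩ := hab
      have h1 : x = u := (hC1.partition a).unique hx1 (Finset.inl_mem_disjSum.1 ha)
      have h2 : x = v := (hC2.partition b).unique hx2 (Finset.inr_mem_disjSum.1 hb)
      exact absurd (h1.symm.trans h2) huv.ne
    -- case lrr
    · obtain ⟨x, hx1, hx2⟩ := hab
      have h1 : x = u := (hC1.partition a).unique hx1 (Finset.inl_mem_disjSum.1 ha)
      have h2 : x = v := (hC2.partition b).unique hx2 (Finset.inr_mem_disjSum.1 hb)
      exact absurd (h1.symm.trans h2) huv.ne
    -- case rll : hab : ∃ x, b ∈ L1 x ∧ a ∈ L2 x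
    · obtain ⟨x, hx1, hx2⟩ := hab
      have h1 : x = v := (hC1.partition b).unique hx1 (Finset.inl_mem_disjSum.1 hb)
      have h2 : x = u := (hC2.partition a).unique hx2 (Finset.inr_mem_disjSum.1 ha)
      exact absurd (h2.symm.trans h1) huv.ne
    -- case rlr
    · obtain ⟨x, hx1, hx2⟩ := hab
      have h1 : x = v := (hC1.partition b).unique hx1 (Finset.inl_mem_disjSum.1 hb)
      have h2 : x = u := (hC2.partition a).unique hx2 (Finset.inr_mem_disjSum.1 ha)
      exact absurd (h2.symm.trans h1) huv.ne
    -- case rrl : hab' : ∃ x, b' ∈ L1 x ∧ a ∈ L2 x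
    · obtain ⟨x, hx1, hx2⟩ := hab'
      have h1 : x = v := (hC1.partition b').unique hx1 (Finset.inl_mem_disjSum.1 hb')
      have h2 : x = u := (hC2.partition a).unique hx2 (Finset.inr_mem_disjSum.1 ha)
      exact absurd (h2.symm.trans h1) huv.ne
    -- case rrr
    · exact congrArg Sum.inr (hC2.matching huv a (Finset.inr_mem_disjSum.1 ha)
        b (Finset.inr_mem_disjSum.1 hb) b' (Finset.inr_mem_disjSum.1 hb') hab hab')
  · rintro u v huv hnadj (a | a) ha (b | b) hb hab
    · exact hC1.nonadj huv hnadj a (Finset.inl_mem_disjSum.1 ha) b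
        (Finset.inl_mem_disjSum.1 hb) hab
    · obtain ⟨x, hx1, hx2⟩ := hab
      have h1 : x = u := (hC1.partition a).unique hx1 (Finset.inl_mem_disjSum.1 ha)
      have h2 : x = v := (hC2.partition b).unique hx2 (Finset.inr_mem_disjSum.1 hb)
      exact huv (h1 ▸ h2)
    · obtain ⟨x, hx1, hx2⟩ := hab
      have h1 : x = v := (hC1.partition b).unique hx1 (Finset.inl_mem_disjSum.1 hb)
      have h2 : x = u := (hC2.partition a).unique hx2 (Finset.inr_mem_disjSum.1 ha)
      exact huv (h2 ▸ h1)
    · exact hC2.nonadj huv hnadj a (Finset.inr_mem_disjSum.1 ha) b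
        (Finset.inr_mem_disjSum.1 hb) hab

lemma sumL_card (t s : ℕ) (h1 : ∀ v, (L1 v).card = t) (h2 : ∀ v, (L2 v).card = s) (v : V) :
    (sumL L1 L2 v).card = t + s := by
  simp [sumL, Finset.card_disjSum, h1 v, h2 v]

lemma toLeft_indep {S : Finset (W1 ⊕ W2)} (h : IsIndepFinset (sumH H1 H2 L1 L2) S) :
    IsIndepFinset H1 S.toLeft := by
  intro a ha b hb hab
  exact h (Sum.inl a) (Finset.mem_toLeft.1 ha) (Sum.inl b) (Finset.mem_toLeft.1 hb) hab

lemma toRight_indep {S : Finset (W1 ⊕ W2)} (h : IsIndepFinset (sumH H1 H2 L1 L2) S) :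
    IsIndepFinset H2 S.toRight := by
  intro a ha b hb hab
  exact h (Sum.inr a) (Finset.mem_toRight.1 ha) (Sum.inr b) (Finset.mem_toRight.1 hb) hab

end SumCover

/-! ### Key inequality -/

lemma key_add {V : Type} [Fintype V] (G : SimpleGraph V) {t s : ℕ} (hts : t + s = chiDP G) :
    Fintype.card V ≤ alphaDP G t + alphaDP G s := by
  have h1 : alphaDP G t ∈ {n : ℕ | ∃ (W : Type) (_ : Fintype W) (H : SimpleGraph W)
      (L : V → Finset W), DPCover G H L ∧ (∀ v, (L v).card = t) ∧ _root_.indepNum H = n} :=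
    Nat.sInf_mem (alphaDP_set_nonempty G t)
  have h2 : alphaDP G s ∈ {n : ℕ | ∃ (W : Type) (_ : Fintype W) (H : SimpleGraph W)
      (L : V → Finset W), DPCover G H L ∧ (∀ v, (L v).card = s) ∧ _root_.indepNum H = n} :=
    Nat.sInf_mem (alphaDP_set_nonempty G s)
  obtain ⟨W1, i1, H1, L1, hC1, hc1, hn1⟩ := h1
  obtain ⟨W2, i2, H2, L2, hC2, hc2, hn2⟩ := h2
  haveI := i1; haveI := i2
  have hchi : chiDP G ∈ {m : ℕ | ∀ (W : Type) (_ : Fintype W) (H : SimpleGraph W)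
      (L : V → Finset W), DPCover G H L → (∀ v, (L v).card = m) →
      ∃ S : Finset W, IsIndepFinset H S ∧ S.card = Fintype.card V} :=
    Nat.sInf_mem (chiDP_set_nonempty G)
  obtain ⟨S, hSind, hScard⟩ := hchi (W1 ⊕ W2) inferInstance (sumH H1 H2 L1 L2) (sumL L1 L2)
    (sumCover G H1 H2 L1 L2 hC1 hC2)
    (fun v => by rw [sumL_card L1 L2 t s hc1 hc2 v, hts])
  calc Fintype.card V = S.card := hScard.symm
    _ = S.toLeft.card + S.toRight.card := Finset.card_toLeft_add_card_toRight.symm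
    _ ≤ @_root_.indepNum W1 i1 H1 + @_root_.indepNum W2 i2 H2 :=
        Nat.add_le_add (@card_le_indepNum W1 i1 H1 _ (toLeft_indep H1 H2 L1 L2 hSind))
          (@card_le_indepNum W2 i2 H2 _ (toRight_indep H1 H2 L1 L2 hSind))
    _ = alphaDP G t + alphaDP G s := by rw [hn1, hn2]

/-- The inequality `α_t^{DP}(G) ≥ t|V(G)|/χ_DP(G)` holds for at least half of the
values of `t` in `{1, …, χ_DP(G) − 1}`: the number of such `t` is at least
`⌈(χ_DP(G) − 1)/2⌉`. -/
theorem alphaDP_half_the_values {V : Type} [Fintype V] (G : SimpleGraph V) :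
    ⌈((chiDP G : ℚ) - 1) / 2⌉ ≤
      ({t : ℕ | 1 ≤ t ∧ t ≤ chiDP G - 1 ∧
        (t * Fintype.card V : ℚ) / (chiDP G : ℚ) ≤ (alphaDP G t : ℚ)}.ncard : ℤ) := by
  classical
  set χ := chiDP G with hχ
  set n := Fintype.card V with hn
  rcases Nat.eq_zero_or_pos χ with h0 | hpos
  · rw [h0]
    have h1 : (⌈(((0:ℕ) : ℚ) - 1) / 2⌉ : ℤ) ≤ 0 := by
      rw [Int.ceil_le]; norm_num
    exact le_trans h1 (by positivity)
  -- The finset version of the good set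
  set A : Finset ℕ := (Finset.Icc 1 (χ - 1)).filter
    (fun t => ((t : ℚ) * n) / (χ : ℚ) ≤ (alphaDP G t : ℚ)) with hA
  have hsetA : {t : ℕ | 1 ≤ t ∧ t ≤ χ - 1 ∧
      ((t : ℚ) * n) / (χ : ℚ) ≤ (alphaDP G t : ℚ)} = ↑A := by
    ext t
    simp [hA, Finset.mem_filter, Finset.mem_Icc, and_assoc]
  rw [hsetA, Set.ncard_coe_finset]
  -- the pairing argument
  set B : Finset ℕ := Finset.Icc 1 (χ - 1) \ A with hB
  have hmap : ∀ t ∈ B, χ - t ∈ A := by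
    intro t ht
    rw [hB, Finset.mem_sdiff] at ht
    obtain ⟨htI, htA⟩ := ht
    rw [Finset.mem_Icc] at htI
    have hbad : ¬ ((t : ℚ) * n) / (χ : ℚ) ≤ (alphaDP G t : ℚ) := by
      intro h
      exact htA (Finset.mem_filter.2 ⟨Finset.mem_Icc.2 htI, h⟩)
    push_neg at hbad
    have hts : t + (χ - t) = χ := by omega
    have hkey : (n : ℚ) ≤ (alphaDP G t : ℚ) + (alphaDP G (χ - t) : ℚ) := by
      exact_mod_cast key_add G hts
    have hχQ : (0 : ℚ) < (χ : ℚ) := by exact_mod_cast hpos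
    rw [hA, Finset.mem_filter, Finset.mem_Icc]
    refine ⟨⟨by omega, by omega⟩, ?_⟩
    have hcast : ((χ - t : ℕ) : ℚ) = (χ : ℚ) - (t : ℚ) := by
      have : t ≤ χ := by omega
      push_cast [this]
      ring
    rw [hcast]
    rw [div_le_iff₀ hχQ]
    rw [lt_div_iff₀ hχQ] at hbad
    nlinarith [hbad, hkey, mul_le_mul_of_nonneg_right hkey (le_of_lt hχQ)]
  have hinj : Set.InjOn (fun t => χ - t) ↑B := by
    intro a ha b hb hab
    have ha' := Finset.mem_Icc.1 (Finset.mem_sdiff.1 (Finset.mem_coe.1 ha)).1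
    have hb' := Finset.mem_Icc.1 (Finset.mem_sdiff.1 (Finset.mem_coe.1 hb)).1
    simp only at hab
    omega
  have hBA : B.card ≤ A.card := Finset.card_le_card_of_injOn _ hmap hinj
  have hsplit : A.card + B.card = χ - 1 := by
    have hAs : A ⊆ Finset.Icc 1 (χ - 1) := Finset.filter_subset _ _
    have h1 := Finset.card_sdiff_of_subset hAs
    have h2 : A.card ≤ (Finset.Icc 1 (χ - 1)).card := Finset.card_le_card hAs
    have h3 : (Finset.Icc 1 (χ - 1)).card = χ - 1 := by rw [Nat.card_Icc]; omega
    rw [hB]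
    omega
  -- final arithmetic
  rw [Int.ceil_le]
  push_cast
  have hnat : χ - 1 ≤ 2 * A.card := by omega
  have hc1 : ((χ - 1 : ℕ) : ℚ) = (χ : ℚ) - 1 := by
    have h1 : (1 : ℕ) ≤ χ := hpos
    push_cast [h1]
    ring
  have h2A : ((χ - 1 : ℕ) : ℚ) ≤ ((2 * A.card : ℕ) : ℚ) := by exact_mod_cast hnat
  rw [hc1] at h2A
  push_cast at h2A
  linarith
end

section
/- Let G be a finite simple graph and let s, t be positive integers such that t divides s. If α_s^{DP}(G) ≥ s·|V(G)|/χ_DP(G), then α_t^{DP}(G) ≥ t·|V(G)|/χ_DP(G). -/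
open SimpleGraph

lemma indep_card_le_indepNum {W : Type} [Fintype W] (H : SimpleGraph W)
    {S : Finset W} (hS : IsIndepFinset H S) : S.card ≤ _root_.indepNum H := by
  apply le_csSup
  · refine ⟨Fintype.card W, ?_⟩
    rintro n ⟨T, -, rfl⟩
    exact T.card_le_univ
  · exact ⟨S, hS, rfl⟩

/-- the canonical `t`-fold cover -/
lemma alphaDP_mem {V : Type} [Fintype V] (G : SimpleGraph V) (t : ℕ) :
    ∃ (W : Type) (_ : Fintype W) (H : SimpleGraph W) (L : V → Finset W),
      DPCover G H L ∧ (∀ v, (L v).card = t) ∧ _root_.indepNum H = alphaDP G t := by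
  classical
  have hne : {n : ℕ | ∃ (W : Type) (_ : Fintype W) (H : SimpleGraph W) (L : V → Finset W),
      DPCover G H L ∧ (∀ v, (L v).card = t) ∧ _root_.indepNum H = n}.Nonempty := by
    refine ⟨_, V × Fin t, inferInstance,
      SimpleGraph.fromRel (fun a b => a.1 = b.1 ∨ (G.Adj a.1 b.1 ∧ a.2 = b.2)),
      fun v => ({v} : Finset V) ×ˢ Finset.univ, ?_, ?_, rfl⟩
    · have hmem : ∀ (v : V) (w : V × Fin t), w ∈ ({v} : Finset V) ×ˢ Finset.univ ↔ w.1 = v := by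
        intro v w
        simp only [Finset.mem_product, Finset.mem_singleton, Finset.mem_univ, and_true]
      constructor
      · intro w
        exact ⟨w.1, (hmem w.1 w).2 rfl, fun v hv => ((hmem v w).1 hv).symm⟩
      · intro v a ha b hb hne
        rw [hmem] at ha hb
        exact ⟨hne, Or.inl (Or.inl (ha.trans hb.symm))⟩
      · intro u v huv a ha b hb b' hb' hab hab'
        rw [hmem] at ha hb hb'
        have h1 : a.2 = b.2 := by
          rcases hab.2 with (h | h) | (h | h)
          · exact absurd (ha.symm.trans (h.trans hb)) huv.ne
          · exact h.2
          · exact absurd (ha.symm.trans (h.symm.trans hb)) huv.ne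
          · exact h.2.symm
        have h2 : a.2 = b'.2 := by
          rcases hab'.2 with (h | h) | (h | h)
          · exact absurd (ha.symm.trans (h.trans hb')) huv.ne
          · exact h.2
          · exact absurd (ha.symm.trans (h.symm.trans hb')) huv.ne
          · exact h.2.symm
        exact Prod.ext (hb.trans hb'.symm) (h1.symm.trans h2)
      · intro u v huv hnadj a ha b hb hab
        rw [hmem] at ha hb
        rcases hab.2 with (h | h) | (h | h)
        · exact huv (ha.symm.trans (h.trans hb))
        · exact hnadj (ha ▸ hb ▸ h.1)
        · exact huv (ha.symm.trans (h.symm.trans hb))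
        · exact hnadj (ha ▸ hb ▸ h.1.symm)
    · intro v
      simp [Finset.card_product]
  obtain ⟨W, iW, H, L, hc, hcard, hval⟩ := Nat.sInf_mem hne
  exact ⟨W, iW, H, L, hc, hcard, hval⟩

/-- If `t` divides `s` and `α_s^{DP}(G) ≥ s|V(G)|/χ_DP(G)`, then
`α_t^{DP}(G) ≥ t|V(G)|/χ_DP(G)`. -/
theorem alphaDP_of_dvd {V : Type} [Fintype V] (G : SimpleGraph V)
    (s t : ℕ) (hs : 0 < s) (ht : 0 < t) (hdvd : t ∣ s)
    (h : (s * Fintype.card V : ℚ) / (chiDP G : ℚ) ≤ (alphaDP G s : ℚ)) :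
    (t * Fintype.card V : ℚ) / (chiDP G : ℚ) ≤ (alphaDP G t : ℚ) := by
  classical
  obtain ⟨k, hk⟩ := hdvd
  have hk0 : 0 < k := Nat.pos_of_ne_zero (fun h0 => by subst h0; simp at hk; omega)
  obtain ⟨W, iW, H, L, hc, hcard, hval⟩ := alphaDP_mem G t
  -- build the k-copies cover
  set H' : SimpleGraph (W × Fin k) :=
    SimpleGraph.fromRel (fun a b => (∃ v, a.1 ∈ L v ∧ b.1 ∈ L v) ∨ (H.Adj a.1 b.1 ∧ a.2 = b.2))
    with hH'
  set L' : V → Finset (W × Fin k) := fun v => (L v) ×ˢ Finset.univ with hL'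
  have hmem : ∀ (v : V) (w : W × Fin k), w ∈ L' v ↔ w.1 ∈ L v := by
    intro v w; simp [hL', Finset.mem_product]
  have hsame : ∀ {u v : V} {a b : W}, u ≠ v → a ∈ L u → b ∈ L v →
      ¬ (∃ x, a ∈ L x ∧ b ∈ L x) := by
    rintro u v a b huv ha hb ⟨x, hax, hbx⟩
    obtain ⟨w0, -, huniq⟩ := hc.partition a
    obtain ⟨w1, -, huniq'⟩ := hc.partition b
    exact huv (((huniq u ha).trans (huniq x hax).symm).trans
      ((huniq' x hbx).trans (huniq' v hb).symm))
  have hcover : DPCover G H' L' := by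
    constructor
    · intro w
      obtain ⟨v, hv, huniq⟩ := hc.partition w.1
      exact ⟨v, (hmem v w).2 hv, fun u hu => huniq u ((hmem u w).1 hu)⟩
    · intro v a ha b hb hne
      rw [hmem] at ha hb
      exact ⟨hne, Or.inl (Or.inl ⟨v, ha, hb⟩)⟩
    · intro u v huv a ha b hb b' hb' hab hab'
      rw [hmem] at ha hb hb'
      have key : ∀ {c : W × Fin k}, c.1 ∈ L v → H'.Adj a c → H.Adj a.1 c.1 ∧ a.2 = c.2 := by
        intro c hcv hac
        rcases hac.2 with (hx | hx) | (hx | hx)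
        · exact absurd hx (hsame huv.ne ha hcv)
        · exact hx
        · exact absurd (by obtain ⟨x, h1, h2⟩ := hx; exact ⟨x, h2, h1⟩) (hsame huv.ne ha hcv)
        · exact ⟨hx.1.symm, hx.2.symm⟩
      obtain ⟨e1, e2⟩ := key hb hab
      obtain ⟨e1', e2'⟩ := key hb' hab'
      exact Prod.ext (hc.matching huv a.1 ha b.1 hb b'.1 hb' e1 e1') (e2.symm.trans e2')
    · intro u v huv hnadj a ha b hb hab
      rw [hmem] at ha hb
      rcases hab.2 with (hx | hx) | (hx | hx)
      · exact hsame huv ha hb hx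
      · exact hc.nonadj huv hnadj a.1 ha b.1 hb hx.1
      · exact hsame huv ha hb (by obtain ⟨x, h1, h2⟩ := hx; exact ⟨x, h2, h1⟩)
      · exact hc.nonadj huv hnadj a.1 ha b.1 hb hx.1.symm
  have hcard' : ∀ v, (L' v).card = s := by
    intro v
    simp [hL', Finset.card_product, hcard v, hk]
  -- α_s ≤ indepNum H'
  have h1 : alphaDP G s ≤ _root_.indepNum H' :=
    Nat.sInf_le ⟨W × Fin k, inferInstance, H', L', hcover, hcard', rfl⟩
  -- indepNum H' ≤ k * indepNum H
  have h2 : _root_.indepNum H' ≤ k * _root_.indepNum H := by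
    have h0 : (0:ℕ) ∈ {n : ℕ | ∃ S : Finset (W × Fin k), IsIndepFinset H' S ∧ S.card = n} :=
      ⟨∅, fun a ha => absurd ha (Finset.notMem_empty a), rfl⟩
    apply csSup_le ⟨0, h0⟩
    rintro n ⟨S, hS, rfl⟩
    have hfib : S.card = ∑ i : Fin k, (S.filter fun x => x.2 = i).card :=
      Finset.card_eq_sum_card_fiberwise (fun x _ => Finset.mem_univ x.2)
    rw [hfib]
    calc ∑ i : Fin k, (S.filter fun x => x.2 = i).card
        ≤ ∑ _i : Fin k, _root_.indepNum H := by
          apply Finset.sum_le_sum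
          intro i _
          have himg : ((S.filter fun x => x.2 = i).image Prod.fst).card
              = (S.filter fun x => x.2 = i).card := by
            apply Finset.card_image_of_injOn
            intro x hx y hy hxy
            simp only [Finset.coe_filter, Set.mem_setOf_eq] at hx hy
            exact Prod.ext hxy (hx.2.trans hy.2.symm)
          rw [← himg]
          apply indep_card_le_indepNum H
          intro a ha b hb hab
          simp only [Finset.mem_image, Finset.mem_filter] at ha hb
          obtain ⟨⟨a0, ia⟩, ⟨haS, hai⟩, rfl⟩ := ha
          obtain ⟨⟨b0, ib⟩, ⟨hbS, hbi⟩, rfl⟩ := hb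
          subst hai; subst hbi
          exact hS _ haS _ hbS ⟨by simpa using hab.ne, Or.inl (Or.inr ⟨hab, rfl⟩)⟩
      _ = k * _root_.indepNum H := by simp [Finset.sum_const, mul_comm]
  have hA : (alphaDP G s : ℚ) ≤ (k : ℚ) * (alphaDP G t : ℚ) := by
    rw [← hval]
    exact_mod_cast h1.trans h2
  by_cases hχ : (chiDP G : ℚ) = 0
  · rw [hχ, div_zero]; positivity
  · have hχ' : 0 < (chiDP G : ℚ) := lt_of_le_of_ne (by positivity) (Ne.symm hχ)
    rw [div_le_iff₀ hχ'] at h ⊢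
    have hkQ : (0:ℚ) < k := by exact_mod_cast hk0
    have hsQ : (s : ℚ) = t * k := by exact_mod_cast hk
    nlinarith [h.trans (by nlinarith [hχ'.le, hA] : (alphaDP G s : ℚ) * chiDP G ≤ (k * alphaDP G t) * chiDP G)]
end

section
/- Let G be a finite simple graph such that every induced subgraph G' of G satisfies χ(G') = χ_DP(G') (where χ denotes the ordinary chromatic number). Then G is partially DP-nice, i.e., α_t^{DP}(G) ≥ t·|V(G)|/χ_DP(G) for every integer t with 1 ≤ t ≤ χ_DP(G). -/
open SimpleGraph

/-- The chromatic number of a graph: the least `n` such that `G` is `n`-colorable. -/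
noncomputable def chromNum {V : Type} (G : SimpleGraph V) : ℕ :=
  sInf {n : ℕ | G.Colorable n}


/-- Averaging: some `t` of the `K.card` values capture at least a `t/K.card` fraction. -/
lemma avg_subset {ι : Type} [DecidableEq ι] :
    ∀ (t : ℕ) (K : Finset ι) (a : ι → ℕ), t ≤ K.card →
    ∃ T ⊆ K, T.card = t ∧ t * (∑ i ∈ K, a i) ≤ K.card * ∑ i ∈ T, a i := by
  intro t
  induction t with
  | zero => intro K a _; exact ⟨∅, Finset.empty_subset _, rfl, by simp⟩
  | succ t ih =>
    intro K a ht
    rcases eq_or_lt_of_le ht with heq | hlt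
    · exact ⟨K, Finset.Subset.refl _, heq.symm, by rw [← heq]⟩
    · have hK : K.Nonempty := Finset.card_pos.mp (by omega)
      obtain ⟨i, hiK, hmax⟩ := Finset.exists_max_image K a hK
      have hsum_le : ∑ j ∈ K, a j ≤ K.card * a i := by
        calc ∑ j ∈ K, a j ≤ ∑ _j ∈ K, a i := Finset.sum_le_sum (fun j hj => hmax j hj)
        _ = K.card * a i := by rw [Finset.sum_const, smul_eq_mul]
      have hcard_erase : (K.erase i).card = K.card - 1 := Finset.card_erase_of_mem hiK
      obtain ⟨T', hT'sub, hT'card, hT'⟩ := ih (K.erase i) a (by omega)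
      have hiT' : i ∉ T' := fun hmem => (Finset.mem_erase.mp (hT'sub hmem)).1 rfl
      refine ⟨insert i T', ?_, ?_, ?_⟩
      · intro x hx
        rcases Finset.mem_insert.mp hx with hx | hx
        · exact hx ▸ hiK
        · exact Finset.erase_subset _ _ (hT'sub hx)
      · rw [Finset.card_insert_of_notMem hiT', hT'card]
      · rw [Finset.sum_insert hiT']
        have hsplit : ∑ j ∈ K.erase i, a j + a i = ∑ j ∈ K, a j :=
          Finset.sum_erase_add K a hiK
        obtain ⟨m, hm⟩ : ∃ m, K.card = m + 1 := ⟨K.card - 1, by omega⟩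
        obtain ⟨d, hd⟩ : ∃ d, m = t + d := ⟨m - t, by omega⟩
        set n' := ∑ j ∈ K.erase i, a j
        set s' := ∑ j ∈ T', a j
        have h1 : n' ≤ (t + d) * a i := by nlinarith [hsum_le, hsplit]
        have h2 : t * n' ≤ (t + d) * s' := by
          have : (K.erase i).card = t + d := by omega
          rw [this] at hT'; exact hT'
        have key : (t+d) * ((t+1) * (n' + a i)) ≤ (t+d) * (((t+d)+1) * (a i + s')) := by
          nlinarith [Nat.mul_le_mul_left d h1, Nat.mul_le_mul_left (t+d+1) h2]
        have hpos : 0 < t + d := by omega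
        have := Nat.le_of_mul_le_mul_left key hpos
        calc (t+1) * ∑ j ∈ K, a j = (t+1) * (n' + a i) := by rw [hsplit]
          _ ≤ ((t+d)+1) * (a i + s') := this
          _ = K.card * (a i + s') := by rw [show K.card = t + d + 1 by omega]

section Canon
variable {V : Type} (G : SimpleGraph V)

/-- The canonical `t`-fold cover graph. -/
def canonH (t : ℕ) : SimpleGraph (V × Fin t) :=
  SimpleGraph.fromRel (fun a b => a.1 = b.1 ∨ (G.Adj a.1 b.1 ∧ a.2 = b.2))

/-- The canonical `t`-fold cover lists. -/
def canonL (t : ℕ) (v : V) : Finset (V × Fin t) :=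
  Finset.univ.map ⟨fun i => (v, i), fun a b hab => (Prod.ext_iff.mp hab).2⟩

lemma mem_canonL {t : ℕ} {v : V} {w : V × Fin t} : w ∈ canonL t v ↔ w.1 = v := by
  simp only [canonL, Finset.mem_map, Finset.mem_univ, true_and, Function.Embedding.coeFn_mk]
  constructor
  · rintro ⟨i, rfl⟩; rfl
  · intro hw; exact ⟨w.2, by rw [← hw]; rfl⟩

lemma canonH_adj {t : ℕ} {a b : V × Fin t} :
    (canonH G t).Adj a b ↔ a ≠ b ∧ (a.1 = b.1 ∨ (G.Adj a.1 b.1 ∧ a.2 = b.2)) := by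
  rw [canonH, SimpleGraph.fromRel_adj]
  refine and_congr_right fun _ => ⟨?_, fun h => Or.inl h⟩
  rintro (h | h)
  · exact h
  · rcases h with h | h
    · exact Or.inl h.symm
    · exact Or.inr ⟨h.1.symm, h.2.symm⟩

lemma canonL_card {t : ℕ} (v : V) : (canonL (V := V) t v).card = t := by
  simp [canonL]

lemma canon_cover (t : ℕ) : DPCover G (canonH G t) (canonL t) := by
  constructor
  · intro w
    refine ⟨w.1, mem_canonL.mpr rfl, fun v hv => (mem_canonL.mp hv).symm⟩
  · intro v a ha b hb hab
    exact canonH_adj G |>.mpr ⟨hab, Or.inl ((mem_canonL.mp ha).trans (mem_canonL.mp hb).symm)⟩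
  · intro u v huv a ha b hb b' hb' h1 h2
    have hau : a.1 = u := mem_canonL.mp ha
    have hbv : b.1 = v := mem_canonL.mp hb
    have hb'v : b'.1 = v := mem_canonL.mp hb'
    have hne : u ≠ v := huv.ne
    have e1 := (canonH_adj G |>.mp h1).2
    have e2 := (canonH_adj G |>.mp h2).2
    have s1 : a.2 = b.2 := by
      rcases e1 with h | h
      · exact absurd (hau ▸ hbv ▸ h) hne
      · exact h.2
    have s2 : a.2 = b'.2 := by
      rcases e2 with h | h
      · exact absurd (hau ▸ hb'v ▸ h) hne
      · exact h.2
    exact Prod.ext (hbv.trans hb'v.symm) (s1 ▸ s2)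
  · intro u v hne hnadj a ha b hb hadj
    have hau : a.1 = u := mem_canonL.mp ha
    have hbv : b.1 = v := mem_canonL.mp hb
    rcases (canonH_adj G |>.mp hadj).2 with h | h
    · exact hne (hau ▸ hbv ▸ h)
    · exact hnadj (hau ▸ hbv ▸ h.1)

end Canon

/-- If every `m`-fold cover of `G` admits an `H`-coloring then `G` is `m`-colorable. -/
lemma colorable_of_covers {V : Type} [Fintype V] (G : SimpleGraph V) (m : ℕ)
    (hm : ∀ (W : Type) (_ : Fintype W) (H : SimpleGraph W) (L : V → Finset W),
      DPCover G H L → (∀ v, (L v).card = m) →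
      ∃ S : Finset W, IsIndepFinset H S ∧ S.card = Fintype.card V) :
    G.Colorable m := by
  classical
  obtain ⟨S, hSind, hScard⟩ := hm (V × Fin m) inferInstance (canonH G m) (canonL m)
    (canon_cover G m) (canonL_card)
  have hfib_le : ∀ v : V, (S.filter (fun w => w.1 = v)).card ≤ 1 := by
    intro v
    refine Finset.card_le_one.mpr fun a ha b hb => ?_
    by_contra hab
    have haS := Finset.mem_filter.mp ha
    have hbS := Finset.mem_filter.mp hb
    exact hSind a haS.1 b hbS.1
      ((canonH_adj G).mpr ⟨hab, Or.inl (haS.2.trans hbS.2.symm)⟩)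
  have hsum : ∑ v : V, (S.filter (fun w => w.1 = v)).card = Fintype.card V := by
    have hsc := Finset.card_eq_sum_card_fiberwise (s := S) (t := Finset.univ)
      (f := Prod.fst) (fun x _ => Finset.mem_univ x.1)
    rw [← hsc, hScard]
  have hfib_eq : ∀ v ∈ (Finset.univ : Finset V), (S.filter (fun w => w.1 = v)).card = 1 := by
    rw [← Finset.sum_eq_sum_iff_of_le (fun v _ => hfib_le v)]
    rw [hsum, Finset.sum_const, smul_eq_mul, mul_one, Finset.card_univ]
  have hex : ∀ v : V, ∃ a : V × Fin m, S.filter (fun w => w.1 = v) = {a} := by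
    intro v; exact Finset.card_eq_one.mp (hfib_eq v (Finset.mem_univ v))
  choose g hg using hex
  have hgmem : ∀ v, g v ∈ S ∧ (g v).1 = v := by
    intro v
    have : g v ∈ S.filter (fun w => w.1 = v) := by rw [hg v]; exact Finset.mem_singleton_self _
    exact Finset.mem_filter.mp this
  refine ⟨SimpleGraph.Coloring.mk (fun v => (g v).2) ?_⟩
  intro u v huv hc
  have hne : g u ≠ g v := by
    intro he
    exact huv.ne ((hgmem u).2 ▸ (hgmem v).2 ▸ congrArg Prod.fst he)
  refine hSind (g u) (hgmem u).1 (g v) (hgmem v).1 ?_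
  exact (canonH_adj G).mpr ⟨hne, Or.inr ⟨by rw [(hgmem u).2, (hgmem v).2]; exact huv, hc⟩⟩

/-- Restrict a `t`-fold cover of `G` to the induced subgraph on `S` and shrink the lists
to size `m`; if every `m`-fold cover of `G.induce S` admits a coloring, we get an
independent set of size `S.card` in `H`. -/
lemma restrict_shrink {V W : Type} [Fintype V] [Fintype W] (G : SimpleGraph V)
    (H : SimpleGraph W) (L : V → Finset W) (hcov : DPCover G H L) (t m : ℕ)
    (hcard : ∀ v, (L v).card = t) (hmt : m ≤ t) (S : Finset V)
    (hM : ∀ (W' : Type) (_ : Fintype W') (H' : SimpleGraph W')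
        (L' : ↥(↑S : Set V) → Finset W'),
      DPCover (G.induce (↑S : Set V)) H' L' → (∀ v, (L' v).card = m) →
      ∃ X : Finset W', IsIndepFinset H' X ∧ X.card = Fintype.card ↥(↑S : Set V)) :
    ∃ X : Finset W, IsIndepFinset H X ∧ X.card = S.card := by
  classical
  choose L' hL'sub hL'card using
    fun v => Finset.exists_subset_card_eq (s := L v) (n := m) (by rw [hcard v]; exact hmt)
  set B : Finset W := S.biUnion L' with hB
  let H' : SimpleGraph ↥B := H.comap Subtype.val
  let L'' : ↥(↑S : Set V) → Finset ↥B :=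
    fun v => Finset.subtype (fun w => w ∈ B) (L' v.val)
  have hmem'' : ∀ (v : ↥(↑S : Set V)) (w : ↥B), w ∈ L'' v ↔ (w : W) ∈ L' v.val := by
    intro v w; exact Finset.mem_subtype
  have hcover : DPCover (G.induce (↑S : Set V)) H' L'' := by
    constructor
    · intro w
      obtain ⟨v, hvS, hwv⟩ := Finset.mem_biUnion.mp w.prop
      refine ⟨⟨v, hvS⟩, (hmem'' _ _).mpr hwv, ?_⟩
      intro u hu
      have hu' : (w : W) ∈ L' u.val := (hmem'' _ _).mp hu
      have : u.val = v := (hcov.partition (w : W)).unique (hL'sub _ hu') (hL'sub _ hwv)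
      exact Subtype.ext this
    · intro v a ha b hb hab
      exact hcov.cliques v.val a (hL'sub _ ((hmem'' _ _).mp ha)) b
        (hL'sub _ ((hmem'' _ _).mp hb)) (fun hh => hab (Subtype.ext hh))
    · intro u v huv a ha b hb b' hb' h1 h2
      have : (b : W) = (b' : W) := hcov.matching huv a (hL'sub _ ((hmem'' _ _).mp ha))
        b (hL'sub _ ((hmem'' _ _).mp hb)) b' (hL'sub _ ((hmem'' _ _).mp hb')) h1 h2
      exact Subtype.ext this
    · intro u v hne hnadj a ha b hb hadj
      exact hcov.nonadj (fun hh => hne (Subtype.ext hh)) hnadj a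
        (hL'sub _ ((hmem'' _ _).mp ha)) b (hL'sub _ ((hmem'' _ _).mp hb)) hadj
  have hcard'' : ∀ v, (L'' v).card = m := by
    intro v
    rw [show L'' v = Finset.subtype (fun w => w ∈ B) (L' v.val) from rfl,
      Finset.card_subtype, Finset.filter_true_of_mem, hL'card]
    intro x hx
    exact Finset.mem_biUnion.mpr ⟨v.val, v.prop, hx⟩
  obtain ⟨X, hXind, hXcard⟩ := hM ↥B (FinsetCoe.fintype B) H' L'' hcover hcard''
  refine ⟨X.map ⟨Subtype.val, Subtype.val_injective⟩, ?_, ?_⟩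
  · intro a ha b hb hadj
    obtain ⟨a', ha', rfl⟩ := Finset.mem_map.mp ha
    obtain ⟨b', hb', rfl⟩ := Finset.mem_map.mp hb
    exact hXind a' ha' b' hb' hadj
  · rw [Finset.card_map, hXcard]
    simp

/-- If every induced subgraph `G'` of `G` satisfies `χ(G') = χ_DP(G')`, then `G` is
partially DP-nice. -/
theorem partiallyDPNice_of_hereditary_chrom_eq_chiDP {V : Type} [Fintype V]
    (G : SimpleGraph V)
    (h : ∀ S : Finset V, chromNum (G.induce (S : Set V)) = chiDP (G.induce (S : Set V))) :
    PartiallyDPNice G := by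
  classical
  intro t ht1 htk
  set k := chiDP G with hk
  have hk1 : 1 ≤ k := le_trans ht1 htk
  -- the defining set of `chiDP G` is nonempty and `k` belongs to it
  have hMG : k ∈ {m : ℕ | ∀ (W : Type) (_ : Fintype W) (H : SimpleGraph W) (L : V → Finset W),
      DPCover G H L → (∀ v, (L v).card = m) →
      ∃ S : Finset W, IsIndepFinset H S ∧ S.card = Fintype.card V} := by
    apply Nat.sInf_mem
    by_contra hemp
    rw [Set.not_nonempty_iff_eq_empty] at hemp
    have : k = 0 := by rw [hk, chiDP, hemp, Nat.sInf_empty]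
    omega
  -- a proper k-coloring of G
  obtain ⟨c⟩ := colorable_of_covers G k hMG
  -- pick the t largest color classes
  obtain ⟨T, _hTsub, hTcard, hTbound⟩ := avg_subset t (Finset.univ : Finset (Fin k))
    (fun i => (Finset.univ.filter (fun v => c v = i)).card)
    (by rw [Finset.card_univ, Fintype.card_fin]; exact htk)
  set S : Finset V := Finset.univ.filter (fun v => c v ∈ T) with hS
  have hSsum : S.card = ∑ i ∈ T, (Finset.univ.filter (fun v => c v = i)).card := by
    rw [Finset.card_eq_sum_card_fiberwise (s := S) (f := c) (t := T)
      (fun x hx => (Finset.mem_filter.mp hx).2)]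
    refine Finset.sum_congr rfl fun i hi => ?_
    congr 1
    ext x
    simp only [hS, Finset.mem_filter, Finset.mem_univ, true_and]
    exact ⟨fun hx => hx.2, fun hx => ⟨hx ▸ hi, hx⟩⟩
  have hVsum : ∑ i : Fin k, (Finset.univ.filter (fun v => c v = i)).card = Fintype.card V := by
    have hsc := Finset.card_eq_sum_card_fiberwise (s := (Finset.univ : Finset V))
      (t := (Finset.univ : Finset (Fin k))) (f := c) (fun x _ => Finset.mem_univ (c x))
    rw [← hsc, Finset.card_univ]
  have hbound : t * Fintype.card V ≤ k * S.card := by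
    rw [hVsum, Finset.card_univ, Fintype.card_fin] at hTbound
    rw [hSsum]
    exact hTbound
  -- the induced subgraph on S is t-colorable
  have hcolt : (G.induce (↑S : Set V)).Colorable t := by
    have hcmem : ∀ v : ↥(↑S : Set V), c v.val ∈ T := by
      intro v
      have : v.val ∈ S := v.prop
      exact (Finset.mem_filter.mp this).2
    refine ⟨SimpleGraph.Coloring.mk
      (fun v => Fin.cast hTcard (T.equivFin ⟨c v.val, hcmem v⟩)) ?_⟩
    intro u v huv hc
    have h1 : (⟨c u.val, hcmem u⟩ : ↥T) = ⟨c v.val, hcmem v⟩ :=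
      T.equivFin.injective (Fin.cast_injective hTcard hc)
    exact (c.valid huv) (Subtype.ext_iff.mp h1)
  have hchiDP_le : chiDP (G.induce (↑S : Set V)) ≤ t := by
    rw [← h S, chromNum]
    exact Nat.sInf_le hcolt
  -- unfold the alphaDP infimum via a member
  have hAne : {n : ℕ | ∃ (W : Type) (_ : Fintype W) (H : SimpleGraph W) (L : V → Finset W),
      DPCover G H L ∧ (∀ v, (L v).card = t) ∧ _root_.indepNum H = n}.Nonempty :=
    ⟨_root_.indepNum (canonH G t), V × Fin t, inferInstance, canonH G t, canonL t,
      canon_cover G t, canonL_card, rfl⟩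
  have hmemA := Nat.sInf_mem hAne
  obtain ⟨W, instW, H, L, hcov, hLcard, hind⟩ := hmemA
  rw [alphaDP] at *
  -- two cases on whether the chiDP-set of the induced subgraph is nonempty
  by_cases hM' : ({m : ℕ | ∀ (W' : Type) (_ : Fintype W') (H' : SimpleGraph W')
      (L' : ↥(↑S : Set V) → Finset W'),
      DPCover (G.induce (↑S : Set V)) H' L' → (∀ v, (L' v).card = m) →
      ∃ X : Finset W', IsIndepFinset H' X ∧
        X.card = Fintype.card ↥(↑S : Set V)}).Nonempty
  · -- main case
    have hmmem := Nat.sInf_mem hM'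
    obtain ⟨X, hXind, hXcard⟩ := restrict_shrink G H L hcov t
      (chiDP (G.induce (↑S : Set V))) hLcard hchiDP_le S hmmem
    have hbdd : BddAbove {n : ℕ | ∃ Y : Finset W, IsIndepFinset H Y ∧ Y.card = n} := by
      refine ⟨Fintype.card W, ?_⟩
      rintro n ⟨Y, -, rfl⟩
      exact le_trans (Finset.card_le_univ Y) (le_of_eq Finset.card_univ)
    have h1 : S.card ≤ _root_.indepNum H := le_csSup hbdd ⟨X, hXind, hXcard⟩
    have h2 : t * Fintype.card V ≤ k * _root_.indepNum H :=
      le_trans hbound (Nat.mul_le_mul_left k h1)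
    rw [hind] at h2
    have hkpos : (0 : ℚ) < (k : ℚ) := by exact_mod_cast hk1
    rw [div_le_iff₀ hkpos]
    calc ((t : ℚ) * (Fintype.card V : ℚ)) = ((t * Fintype.card V : ℕ) : ℚ) := by push_cast; ring
      _ ≤ ((k * sInf {n : ℕ | ∃ (W : Type) (_ : Fintype W) (H : SimpleGraph W)
            (L : V → Finset W), DPCover G H L ∧ (∀ v, (L v).card = t) ∧
            _root_.indepNum H = n} : ℕ) : ℚ) := by exact_mod_cast h2
      _ = _ := by push_cast; ring
  · -- degenerate case: S must be empty
    rw [Set.not_nonempty_iff_eq_empty] at hM'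
    have hzero : chiDP (G.induce (↑S : Set V)) = 0 := by
      rw [chiDP, hM', Nat.sInf_empty]
    have hchrom0 : chromNum (G.induce (↑S : Set V)) = 0 := by rw [h S, hzero]
    have hcol0 : (G.induce (↑S : Set V)).Colorable 0 := by
      have hne : {n : ℕ | (G.induce (↑S : Set V)).Colorable n}.Nonempty :=
        ⟨Fintype.card ↥(↑S : Set V), SimpleGraph.colorable_of_fintype _⟩
      have := Nat.sInf_mem hne
      rwa [← chromNum, hchrom0] at this
    obtain ⟨c0⟩ := hcol0
    have hempty : IsEmpty ↥(↑S : Set V) := ⟨fun v => (c0 v).elim0⟩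
    have hScard0 : S.card = 0 := by
      have : Fintype.card ↥(↑S : Set V) = 0 := Fintype.card_eq_zero
      exact Finset.card_eq_zero.mpr (Finset.eq_empty_iff_forall_notMem.mpr fun x hx => hempty.false ⟨x, hx⟩)
    rw [hScard0, Nat.mul_zero] at hbound
    have hV0 : Fintype.card V = 0 := by
      have h0 := Nat.le_zero.mp hbound
      rcases Nat.mul_eq_zero.mp h0 with h' | h'
      · exact absurd h' (Nat.one_le_iff_ne_zero.mp ht1)
      · exact h'
    rw [hV0]
    simp
end

section
/- Every finite simple chordal graph is partially DP-nice; that is, if G is chordal then α_t^{DP}(G) ≥ t·|V(G)|/χ_DP(G) for every integer t with 1 ≤ t ≤ χ_DP(G). -/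
open SimpleGraph

/-- A graph is chordal if every cycle of length at least 4 has a chord: an edge of the
graph joining two vertices of the cycle that is not an edge of the cycle. -/
def IsChordalGraph {V : Type} (G : SimpleGraph V) : Prop :=
  ∀ ⦃v : V⦄ (c : G.Walk v v), c.IsCycle → 4 ≤ c.length →
    ∃ a b : V, a ∈ c.support ∧ b ∈ c.support ∧ G.Adj a b ∧ s(a, b) ∉ c.edges

namespace ChordalDP

variable {V : Type}

/-! ### Generic walk lemmas -/

/-- A shortest walk contains the edge between any two adjacent vertices on it. -/
lemma shortcut [DecidableEq V] {K : SimpleGraph V} {x y : V} (p : K.Walk x y)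
    (hmin : ∀ q : K.Walk x y, p.length ≤ q.length) {c d : V}
    (hc : c ∈ p.support) (hd : d ∈ p.support) (hadj : K.Adj c d) :
    s(c, d) ∈ p.edges := by
  induction p with
  | nil =>
    rw [SimpleGraph.Walk.support_nil, List.mem_singleton] at hc hd
    subst hc; subst hd
    exact absurd hadj (K.irrefl)
  | @cons x u y e q ih =>
    have hminq : ∀ r : K.Walk u y, q.length ≤ r.length := by
      intro r
      have := hmin (SimpleGraph.Walk.cons e r)
      simpa [SimpleGraph.Walk.length_cons] using this
    have key : ∀ d', d' ∈ q.support → K.Adj x d' → s(x, d') ∈ (SimpleGraph.Walk.cons e q).edges := by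
      intro d' hd' ha'
      have hsp := congrArg SimpleGraph.Walk.length (q.take_spec hd')
      rw [SimpleGraph.Walk.length_append] at hsp
      have h2 := hmin (SimpleGraph.Walk.cons ha' (q.dropUntil d' hd'))
      simp only [SimpleGraph.Walk.length_cons] at h2
      have h0 : (q.takeUntil d' hd').length = 0 := by omega
      have hud : u = d' := SimpleGraph.Walk.eq_of_length_eq_zero h0
      subst hud
      simp [SimpleGraph.Walk.edges_cons]
    rw [SimpleGraph.Walk.support_cons] at hc hd
    rcases List.mem_cons.mp hc with rfl | hc' <;> rcases List.mem_cons.mp hd with h | hd'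
    · rw [← h] at hadj; exact absurd hadj (K.irrefl)
    · exact key d hd' hadj
    · subst h
      have := key c hc' hadj.symm
      rwa [Sym2.eq_swap] at this
    · rw [SimpleGraph.Walk.edges_cons]
      exact List.mem_cons_of_mem _ (ih hminq hc' hd')

/-- A shortest walk exists between reachable vertices, and it is a path. -/
lemma exists_shortest {K : SimpleGraph V} {x y : V} (h : K.Reachable x y) :
    ∃ p : K.Walk x y, p.IsPath ∧ ∀ q : K.Walk x y, p.length ≤ q.length := by
  classical
  have hne : ∃ n, ∃ q : K.Walk x y, q.length = n := h.elim (fun p0 => ⟨p0.length, p0, rfl⟩)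
  obtain ⟨q, hq⟩ := Nat.find_spec hne
  refine ⟨q.bypass, q.bypass_isPath, fun r => ?_⟩
  calc q.bypass.length ≤ q.length := q.length_bypass_le
  _ = Nat.find hne := hq
  _ ≤ r.length := Nat.find_min' hne ⟨r, rfl⟩

/-! ### The graph induced on a finite set of vertices -/

/-- The subgraph of `G` induced on the finset `s`, as a graph on the same vertex type. -/
def indG (G : SimpleGraph V) (s : Finset V) : SimpleGraph V where
  Adj a b := a ∈ s ∧ b ∈ s ∧ G.Adj a b
  symm := ⟨fun _ _ ⟨ha, hb, h⟩ => ⟨hb, ha, h.symm⟩⟩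
  loopless := ⟨fun a ⟨_, _, h⟩ => G.loopless.irrefl a h⟩

lemma supp_mem {G : SimpleGraph V} {s : Finset V} :
    ∀ {a b : V} (p : (indG G s).Walk a b), a ∈ s → ∀ z ∈ p.support, z ∈ s := by
  intro a b p
  induction p with
  | nil =>
    intro ha z hz
    rw [SimpleGraph.Walk.support_nil, List.mem_singleton] at hz
    exact hz ▸ ha
  | cons e q ih =>
    intro ha z hz
    rw [SimpleGraph.Walk.support_cons] at hz
    rcases List.mem_cons.mp hz with rfl | hz'
    · exact ha
    · exact ih e.2.1 z hz'

lemma transfer_cond {G : SimpleGraph V} {s s' : Finset V} {a b : V}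
    (p : (indG G s).Walk a b) (hsub : ∀ z ∈ p.support, z ∈ s') :
    ∀ e ∈ p.edges, e ∈ (indG G s').edgeSet := by
  intro e he
  induction e using Sym2.ind with
  | _ c d =>
    have hadj := p.adj_of_mem_edges he
    exact (indG G s').mem_edgeSet.mpr
      ⟨hsub c (p.fst_mem_support_of_mem_edges he),
       hsub d (p.snd_mem_support_of_mem_edges he), hadj.2.2⟩

lemma transfer_condG {G : SimpleGraph V} {s : Finset V} {a b : V}
    (p : (indG G s).Walk a b) :
    ∀ e ∈ p.edges, e ∈ G.edgeSet := by
  intro e he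
  induction e using Sym2.ind with
  | _ c d => exact G.mem_edgeSet.mpr (p.adj_of_mem_edges he).2.2

/-- If `a` and `b` are joined in `indG G u` but not after deleting `x`, then `x` has a
neighbor reachable from `a` after deleting `x`. -/
lemma nbr_lemma [DecidableEq V] {G : SimpleGraph V} {u : Finset V} {x a b : V} (hax : a ≠ x)
    (hr : (indG G u).Reachable a b) (hnr : ¬ (indG G (u.erase x)).Reachable a b) :
    ∃ y, y ∈ u.erase x ∧ G.Adj x y ∧ (indG G (u.erase x)).Reachable a y := by
  obtain ⟨p⟩ := hr
  by_cases hx : x ∈ p.support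
  · have hcount : (p.takeUntil x hx).support.count x = 1 :=
      p.count_support_takeUntil_eq_one hx
    set q := p.takeUntil x hx with hqdef
    have hanil : ¬ q.reverse.Nil := by
      intro hn
      exact hax hn.eq.symm
    obtain ⟨y, e, r, hqr⟩ := SimpleGraph.Walk.not_nil_iff.mp hanil
    have hysupp : x ∉ r.support := by
      have h1 : q.reverse.support = x :: r.support := by
        rw [hqr, SimpleGraph.Walk.support_cons]
      have h2 : q.reverse.support.count x = 1 := by
        rw [SimpleGraph.Walk.support_reverse, List.count_reverse]
        exact hcount
      rw [h1] at h2
      simp only [List.count_cons_self] at h2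
      have h3 : r.support.count x = 0 := by omega
      exact List.count_eq_zero.mp h3
    have hyu : y ∈ u := e.2.1
    have hxyne : x ≠ y := (e.2.2).ne
    have hcond : ∀ z ∈ r.support, z ∈ u.erase x := by
      intro z hz
      exact Finset.mem_erase.mpr ⟨fun hzx => hysupp (hzx ▸ hz), supp_mem r hyu z hz⟩
    refine ⟨y, Finset.mem_erase.mpr ⟨hxyne.symm, hyu⟩, e.2.2, ?_⟩
    exact ((r.transfer _ (transfer_cond r hcond)).reverse.reachable)
  · exfalso
    have hab : a ≠ b := fun h => hnr (h ▸ SimpleGraph.Reachable.refl a)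
    have hpnil : ¬ p.Nil := fun hn => hab hn.eq
    obtain ⟨c, e0, p0, hp0⟩ := SimpleGraph.Walk.not_nil_iff.mp hpnil
    have hau : a ∈ u := e0.1
    have hcond : ∀ z ∈ p.support, z ∈ u.erase x := by
      intro z hz
      exact Finset.mem_erase.mpr ⟨fun h => hx (h ▸ hz), supp_mem p hau z hz⟩
    exact hnr ⟨p.transfer _ (transfer_cond p hcond)⟩

/-! ### Simplicial vertices -/

/-- `v`'s neighbors inside `s` are pairwise adjacent. -/
def Simp (G : SimpleGraph V) (s : Finset V) (v : V) : Prop :=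
  ∀ a ∈ s, ∀ b ∈ s, G.Adj v a → G.Adj v b → a ≠ b → G.Adj a b

def Comp (G : SimpleGraph V) (s : Finset V) : Prop :=
  ∀ a ∈ s, ∀ b ∈ s, a ≠ b → G.Adj a b

/-- Dirac's theorem: a chordal graph is complete or has two nonadjacent simplicial
vertices (relative to a finset `s`). -/
theorem dirac [Fintype V] (G : SimpleGraph V) (hch : IsChordalGraph G) :
    ∀ s : Finset V, s.Nonempty →
      Comp G s ∨ ∃ v ∈ s, ∃ w ∈ s, v ≠ w ∧ ¬ G.Adj v w ∧ Simp G s v ∧ Simp G s w := by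
  classical
  intro s
  generalize hn : s.card = n
  induction n using Nat.strong_induction_on generalizing s with
  | _ n ih =>
  intro hs
  by_cases hcomp : Comp G s
  · exact Or.inl hcomp
  right
  rw [Comp] at hcomp
  push_neg at hcomp
  obtain ⟨a, ha, b, hb, hab, hnadjab⟩ := hcomp
  set SepSet := ((s \ {a, b}).powerset).filter
    (fun T => ¬ (indG G (s \ T)).Reachable a b) with hSepSet
  have hT0 : (s \ {a, b}) ∈ SepSet := by
    rw [hSepSet, Finset.mem_filter]
    refine ⟨Finset.mem_powerset_self _, ?_⟩
    rintro ⟨p⟩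
    cases p with
    | nil => exact hab rfl
    | @cons _ z _ e q =>
      have hz := e.2.1
      rw [Finset.mem_sdiff, Finset.mem_sdiff] at hz
      have hzab : z ∈ ({a, b} : Finset V) := by tauto
      rcases Finset.mem_insert.mp hzab with rfl | hz2
      · exact G.loopless.irrefl z e.2.2
      · rw [Finset.mem_singleton] at hz2
        subst hz2
        exact hnadjab e.2.2
  obtain ⟨T, hTmem, hTmin⟩ := Finset.exists_min_image SepSet Finset.card ⟨_, hT0⟩
  rw [hSepSet, Finset.mem_filter, Finset.mem_powerset] at hTmem
  obtain ⟨hTsub, hTsep⟩ := hTmem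
  have haT : a ∉ T := by
    intro h
    have h2 := hTsub h
    rw [Finset.mem_sdiff] at h2
    exact h2.2 (by simp)
  have hbT : b ∉ T := by
    intro h
    have h2 := hTsub h
    rw [Finset.mem_sdiff] at h2
    exact h2.2 (by simp)
  have has' : a ∈ s \ T := Finset.mem_sdiff.mpr ⟨ha, haT⟩
  have hbs' : b ∈ s \ T := Finset.mem_sdiff.mpr ⟨hb, hbT⟩
  set A := (s \ T).filter (fun z => (indG G (s \ T)).Reachable a z) with hA
  set B := (s \ T).filter (fun z => (indG G (s \ T)).Reachable b z) with hB
  have haA : a ∈ A := Finset.mem_filter.mpr ⟨has', SimpleGraph.Reachable.refl a⟩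
  have hbB : b ∈ B := Finset.mem_filter.mpr ⟨hbs', SimpleGraph.Reachable.refl b⟩
  have hdisj : ∀ z, z ∈ A → z ∈ B → False := by
    intro z hzA hzB
    exact hTsep (((Finset.mem_filter.mp hzA).2).trans ((Finset.mem_filter.mp hzB).2.symm))
  have hclosedA : ∀ z ∈ A, ∀ y ∈ s \ T, G.Adj z y → y ∈ A := by
    intro z hz y hy hadj
    obtain ⟨hz1, hz2⟩ := Finset.mem_filter.mp hz
    exact Finset.mem_filter.mpr ⟨hy, hz2.trans ⟨Walk.cons ⟨hz1, hy, hadj⟩ Walk.nil⟩⟩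
  have hclosedB : ∀ z ∈ B, ∀ y ∈ s \ T, G.Adj z y → y ∈ B := by
    intro z hz y hy hadj
    obtain ⟨hz1, hz2⟩ := Finset.mem_filter.mp hz
    exact Finset.mem_filter.mpr ⟨hy, hz2.trans ⟨Walk.cons ⟨hz1, hy, hadj⟩ Walk.nil⟩⟩
  have hnoAB : ∀ p ∈ A, ∀ q ∈ B, ¬ G.Adj p q ∧ p ≠ q := by
    intro p hp q hq
    constructor
    · intro hadj
      exact hdisj q (hclosedA p hp q (Finset.mem_filter.mp hq).1 hadj) hq
    · rintro rfl
      exact hdisj p hp hq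
  have hreach_erase : ∀ x ∈ T, (indG G (s \ T.erase x)).Reachable a b := by
    intro x hx
    by_contra hnr
    have hTx : T.erase x ∈ SepSet := by
      rw [hSepSet, Finset.mem_filter, Finset.mem_powerset]
      exact ⟨(Finset.erase_subset x T).trans hTsub, hnr⟩
    have h1 := hTmin _ hTx
    have h2 := Finset.card_erase_lt_of_mem hx
    omega
  have herase : ∀ x ∈ T, (s \ T.erase x).erase x = s \ T := by
    intro x hx
    ext z
    simp only [Finset.mem_erase, Finset.mem_sdiff]
    constructor
    · rintro ⟨hzx, hzs, hzT⟩
      exact ⟨hzs, fun hzT' => hzT ⟨hzx, hzT'⟩⟩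
    · rintro ⟨hzs, hzT⟩
      exact ⟨fun h => hzT (h ▸ hx), hzs, fun h => hzT h.2⟩
  have hTnbrA : ∀ x ∈ T, ∃ y ∈ A, G.Adj x y := by
    intro x hx
    have hax : a ≠ x := fun h => haT (h ▸ hx)
    have hnr2 : ¬ (indG G ((s \ T.erase x).erase x)).Reachable a b := by
      rw [herase x hx]
      exact hTsep
    obtain ⟨y, hy1, hy2, hy3⟩ := nbr_lemma hax (hreach_erase x hx) hnr2
    rw [herase x hx] at hy1 hy3
    exact ⟨y, Finset.mem_filter.mpr ⟨hy1, hy3⟩, hy2⟩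
  have hTnbrB : ∀ x ∈ T, ∃ y ∈ B, G.Adj x y := by
    intro x hx
    have hbx : b ≠ x := fun h => hbT (h ▸ hx)
    have hnr2 : ¬ (indG G ((s \ T.erase x).erase x)).Reachable b a := by
      rw [herase x hx]
      exact fun h => hTsep h.symm
    obtain ⟨y, hy1, hy2, hy3⟩ := nbr_lemma hbx (hreach_erase x hx).symm hnr2
    rw [herase x hx] at hy1 hy3
    exact ⟨y, Finset.mem_filter.mpr ⟨hy1, hy3⟩, hy2⟩
  have hclique : ∀ x ∈ T, ∀ y ∈ T, x ≠ y → G.Adj x y := by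
    intro x hx y hy hxy
    by_contra hnxy
    obtain ⟨px, hpxA, hpxadj⟩ := hTnbrA x hx
    obtain ⟨py, hpyA, hpyadj⟩ := hTnbrA y hy
    obtain ⟨qx, hqxB, hqxadj⟩ := hTnbrB x hx
    obtain ⟨qy, hqyB, hqyadj⟩ := hTnbrB y hy
    set uA := insert x (insert y A) with huA
    set uB := insert x (insert y B) with huB
    have hxuA : x ∈ uA := Finset.mem_insert_self _ _
    have hyuA : y ∈ uA := Finset.mem_insert_of_mem (Finset.mem_insert_self _ _)
    have hAuA : ∀ z ∈ A, z ∈ uA := fun z hz =>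
      Finset.mem_insert_of_mem (Finset.mem_insert_of_mem hz)
    have hxuB : x ∈ uB := Finset.mem_insert_self _ _
    have hyuB : y ∈ uB := Finset.mem_insert_of_mem (Finset.mem_insert_self _ _)
    have hBuB : ∀ z ∈ B, z ∈ uB := fun z hz =>
      Finset.mem_insert_of_mem (Finset.mem_insert_of_mem hz)
    have hmidA : ∀ p1 ∈ A, ∀ p2 ∈ A, (indG G uA).Reachable p1 p2 := by
      intro p1 hp1 p2 hp2
      have hr : (indG G (s \ T)).Reachable p1 p2 :=
        ((Finset.mem_filter.mp hp1).2.symm).trans (Finset.mem_filter.mp hp2).2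
      obtain ⟨w⟩ := hr
      have hcond : ∀ z ∈ w.support, z ∈ uA := by
        intro z hz
        apply hAuA
        refine Finset.mem_filter.mpr ⟨supp_mem w (Finset.mem_filter.mp hp1).1 z hz, ?_⟩
        exact ((Finset.mem_filter.mp hp1).2).trans ⟨w.takeUntil z hz⟩
      exact ⟨w.transfer _ (transfer_cond w hcond)⟩
    have hmidB : ∀ p1 ∈ B, ∀ p2 ∈ B, (indG G uB).Reachable p1 p2 := by
      intro p1 hp1 p2 hp2
      have hr : (indG G (s \ T)).Reachable p1 p2 :=
        ((Finset.mem_filter.mp hp1).2.symm).trans (Finset.mem_filter.mp hp2).2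
      obtain ⟨w⟩ := hr
      have hcond : ∀ z ∈ w.support, z ∈ uB := by
        intro z hz
        apply hBuB
        refine Finset.mem_filter.mpr ⟨supp_mem w (Finset.mem_filter.mp hp1).1 z hz, ?_⟩
        exact ((Finset.mem_filter.mp hp1).2).trans ⟨w.takeUntil z hz⟩
      exact ⟨w.transfer _ (transfer_cond w hcond)⟩
    have hreachA : (indG G uA).Reachable x y := by
      have h1 : (indG G uA).Reachable x px :=
        ⟨Walk.cons ⟨hxuA, hAuA px hpxA, hpxadj⟩ Walk.nil⟩
      have h3 : (indG G uA).Reachable py y :=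
        ⟨Walk.cons ⟨hAuA py hpyA, hyuA, hpyadj.symm⟩ Walk.nil⟩
      exact (h1.trans (hmidA px hpxA py hpyA)).trans h3
    have hreachB : (indG G uB).Reachable y x := by
      have h1 : (indG G uB).Reachable y qy :=
        ⟨Walk.cons ⟨hyuB, hBuB qy hqyB, hqyadj⟩ Walk.nil⟩
      have h3 : (indG G uB).Reachable qx x :=
        ⟨Walk.cons ⟨hBuB qx hqxB, hxuB, hqxadj.symm⟩ Walk.nil⟩
      exact (h1.trans (hmidB qy hqyB qx hqxB)).trans h3
    obtain ⟨P, hPpath, hPmin⟩ := exists_shortest hreachA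
    obtain ⟨Q, hQpath, hQmin⟩ := exists_shortest hreachB
    have hPsup : ∀ z ∈ P.support, z ∈ uA := supp_mem P hxuA
    have hQsup : ∀ z ∈ Q.support, z ∈ uB := supp_mem Q hyuB
    have hPlen : 2 ≤ P.length := by
      by_contra hlt
      push_neg at hlt
      interval_cases h : P.length
      · exact hxy (Walk.eq_of_length_eq_zero h)
      · exact hnxy (Walk.adj_of_length_eq_one h).2.2
    have hQlen : 2 ≤ Q.length := by
      by_contra hlt
      push_neg at hlt
      interval_cases h : Q.length
      · exact hxy (Walk.eq_of_length_eq_zero h).symm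
      · exact hnxy (Walk.adj_of_length_eq_one h).2.2.symm
    set P' := P.transfer G (transfer_condG P) with hP'
    set Q' := Q.transfer G (transfer_condG Q) with hQ'
    have hP'sup : P'.support = P.support := P.support_transfer _
    have hP'edg : P'.edges = P.edges := P.edges_transfer _
    have hQ'sup : Q'.support = Q.support := Q.support_transfer _
    have hQ'edg : Q'.edges = Q.edges := Q.edges_transfer _
    set C := P'.append Q' with hC
    have hCsup : C.support = P.support ++ Q.support.tail := by
      rw [hC, Walk.support_append, hP'sup, hQ'sup]
    have hCedge : C.edges = P.edges ++ Q.edges := by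
      rw [hC, Walk.edges_append, hP'edg, hQ'edg]
    have hClen : C.length = P.length + Q.length := by
      rw [hC, Walk.length_append, Walk.length_transfer, Walk.length_transfer]
    have hcommon : ∀ z, z ∈ P.support → z ∈ Q.support → z = x ∨ z = y := by
      intro z hzP hzQ
      have h1 := hPsup z hzP
      have h2 := hQsup z hzQ
      rcases Finset.mem_insert.mp h1 with rfl | h1'
      · exact Or.inl rfl
      rcases Finset.mem_insert.mp h1' with rfl | hzA
      · exact Or.inr rfl
      rcases Finset.mem_insert.mp h2 with rfl | h2'
      · exact Or.inl rfl
      rcases Finset.mem_insert.mp h2' with rfl | hzB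
      · exact Or.inr rfl
      exact (hdisj z hzA hzB).elim
    have hxP : x ∈ P.support := P.start_mem_support
    have hyP : y ∈ P.support := P.end_mem_support
    have hyQ : y ∈ Q.support := Q.start_mem_support
    have hxQ : x ∈ Q.support := Q.end_mem_support
    have hPcons : P.support = x :: P.support.tail := P.support_eq_cons
    have hQcons : Q.support = y :: Q.support.tail := Q.support_eq_cons
    have hcyc : C.IsCycle := by
      refine ⟨⟨⟨?_⟩, ?_⟩, ?_⟩
      · rw [hCedge, List.nodup_append]
        refine ⟨hPpath.edges_nodup, hQpath.edges_nodup, ?_⟩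
        rintro e heP _ heQ rfl
        induction e using Sym2.ind with
        | _ c d =>
          have hcP := P.fst_mem_support_of_mem_edges heP
          have hdP := P.snd_mem_support_of_mem_edges heP
          have hcQ := Q.fst_mem_support_of_mem_edges heQ
          have hdQ := Q.snd_mem_support_of_mem_edges heQ
          have hcd : G.Adj c d := (P.adj_of_mem_edges heP).2.2
          rcases hcommon c hcP hcQ with rfl | rfl <;>
            rcases hcommon d hdP hdQ with rfl | rfl
          · exact hcd.ne rfl
          · exact hnxy hcd
          · exact hnxy hcd.symm
          · exact hcd.ne rfl
      · intro hnil
        have h0 : C.length = 0 := by rw [hnil]; rfl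
        omega
      · rw [hCsup, hPcons, List.cons_append, List.tail_cons, List.nodup_append]
        refine ⟨?_, ?_, ?_⟩
        · exact (List.nodup_cons.mp (hPcons ▸ hPpath.support_nodup)).2
        · exact (List.nodup_cons.mp (hQcons ▸ hQpath.support_nodup)).2
        · rintro z hzP _ hzQ rfl
          have hz1 : z ∈ P.support := by
            rw [hPcons]
            exact List.mem_cons_of_mem _ hzP
          have hz2 : z ∈ Q.support := by
            rw [hQcons]
            exact List.mem_cons_of_mem _ hzQ
          rcases hcommon z hz1 hz2 with rfl | rfl
          · exact (List.nodup_cons.mp (hPcons ▸ hPpath.support_nodup)).1 hzP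
          · exact (List.nodup_cons.mp (hQcons ▸ hQpath.support_nodup)).1 hzQ
    have h4 : 4 ≤ C.length := by omega
    obtain ⟨c, d, hcC, hdC, hcd, hce⟩ := hch C hcyc h4
    have hmemPQ : ∀ z, z ∈ C.support → z ∈ P.support ∨ z ∈ Q.support := by
      intro z hz
      rw [hCsup, List.mem_append] at hz
      rcases hz with hz | hz
      · exact Or.inl hz
      · exact Or.inr (List.tail_subset _ hz)
    have hPcase : ∀ c' d', c' ∈ P.support → d' ∈ P.support → G.Adj c' d' →
        s(c', d') ∈ C.edges := by
      intro c' d' hc' hd' hadj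
      have hmem : s(c', d') ∈ P.edges :=
        shortcut P hPmin hc' hd' ⟨hPsup c' hc', hPsup d' hd', hadj⟩
      rw [hCedge]
      exact List.mem_append_left _ hmem
    have hQcase : ∀ c' d', c' ∈ Q.support → d' ∈ Q.support → G.Adj c' d' →
        s(c', d') ∈ C.edges := by
      intro c' d' hc' hd' hadj
      have hmem : s(c', d') ∈ Q.edges :=
        shortcut Q hQmin hc' hd' ⟨hQsup c' hc', hQsup d' hd', hadj⟩
      rw [hCedge]
      exact List.mem_append_right _ hmem
    have hinA : ∀ z, z ∈ P.support → z ∉ Q.support → z ∈ A := by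
      intro z hzP hzQ
      have h1 := hPsup z hzP
      rcases Finset.mem_insert.mp h1 with rfl | h1'
      · exact absurd hxQ hzQ
      rcases Finset.mem_insert.mp h1' with rfl | hzA
      · exact absurd hyQ hzQ
      · exact hzA
    have hinB : ∀ z, z ∈ Q.support → z ∉ P.support → z ∈ B := by
      intro z hzQ hzP
      have h1 := hQsup z hzQ
      rcases Finset.mem_insert.mp h1 with rfl | h1'
      · exact absurd hxP hzP
      rcases Finset.mem_insert.mp h1' with rfl | hzB
      · exact absurd hyP hzP
      · exact hzB
    rcases hmemPQ c hcC with hcP2 | hcQ2 <;> rcases hmemPQ d hdC with hdP2 | hdQ2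
    · exact hce (hPcase c d hcP2 hdP2 hcd)
    · by_cases hcQ2 : c ∈ Q.support
      · exact hce (hQcase c d hcQ2 hdQ2 hcd)
      by_cases hdP2 : d ∈ P.support
      · exact hce (hPcase c d hcP2 hdP2 hcd)
      exact (hnoAB c (hinA c hcP2 hcQ2) d (hinB d hdQ2 hdP2)).1 hcd
    · by_cases hcP2 : c ∈ P.support
      · exact hce (hPcase c d hcP2 hdP2 hcd)
      by_cases hdQ2 : d ∈ Q.support
      · exact hce (hQcase c d hcQ2 hdQ2 hcd)
      exact (hnoAB d (hinA d hdP2 hdQ2) c (hinB c hcQ2 hcP2)).1 hcd.symm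
    · exact hce (hQcase c d hcQ2 hdQ2 hcd)
  have hArec : ∃ v ∈ A, Simp G s v := by
    have hsub : A ∪ T ⊆ s := by
      intro z hz
      rcases Finset.mem_union.mp hz with h | h
      · exact (Finset.mem_sdiff.mp (Finset.mem_filter.mp h).1).1
      · exact (Finset.mem_sdiff.mp (hTsub h)).1
    have hbnot : b ∉ A ∪ T := by
      intro h
      rcases Finset.mem_union.mp h with h | h
      · exact hdisj b h hbB
      · exact hbT h
    have hcard : (A ∪ T).card < n := by
      rw [← hn]
      exact Finset.card_lt_card ((Finset.ssubset_iff_of_subset hsub).mpr ⟨b, hb, hbnot⟩)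
    have hANe : (A ∪ T).Nonempty := ⟨a, Finset.mem_union_left _ haA⟩
    have hlift : ∀ v ∈ A, Simp G (A ∪ T) v → Simp G s v := by
      intro v hv hsimp p hp q hq hvp hvq hpq
      have hmem : ∀ z ∈ s, G.Adj v z → z ∈ A ∪ T := by
        intro z hz hadj
        by_cases hzT : z ∈ T
        · exact Finset.mem_union_right _ hzT
        · exact Finset.mem_union_left _
            (hclosedA v hv z (Finset.mem_sdiff.mpr ⟨hz, hzT⟩) hadj)
      exact hsimp p (hmem p hp hvp) q (hmem q hq hvq) hvp hvq hpq
    rcases ih _ hcard (A ∪ T) rfl hANe with hCo | ⟨v, hv, w, hw, hvw, hnadj2, hsv, hsw⟩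
    · refine ⟨a, haA, hlift a haA ?_⟩
      intro p hp q hq _ _ hpq
      exact hCo p hp q hq hpq
    · have hone : v ∈ A ∨ w ∈ A := by
        by_contra hcon
        push_neg at hcon
        have hvT : v ∈ T := (Finset.mem_union.mp hv).resolve_left hcon.1
        have hwT : w ∈ T := (Finset.mem_union.mp hw).resolve_left hcon.2
        exact hnadj2 (hclique v hvT w hwT hvw)
      rcases hone with h | h
      · exact ⟨v, h, hlift v h hsv⟩
      · exact ⟨w, h, hlift w h hsw⟩
  have hBrec : ∃ v ∈ B, Simp G s v := by
    have hsub : B ∪ T ⊆ s := by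
      intro z hz
      rcases Finset.mem_union.mp hz with h | h
      · exact (Finset.mem_sdiff.mp (Finset.mem_filter.mp h).1).1
      · exact (Finset.mem_sdiff.mp (hTsub h)).1
    have hanot : a ∉ B ∪ T := by
      intro h
      rcases Finset.mem_union.mp h with h | h
      · exact hdisj a haA h
      · exact haT h
    have hcard : (B ∪ T).card < n := by
      rw [← hn]
      exact Finset.card_lt_card ((Finset.ssubset_iff_of_subset hsub).mpr ⟨a, ha, hanot⟩)
    have hBNe : (B ∪ T).Nonempty := ⟨b, Finset.mem_union_left _ hbB⟩
    have hlift : ∀ v ∈ B, Simp G (B ∪ T) v → Simp G s v := by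
      intro v hv hsimp p hp q hq hvp hvq hpq
      have hmem : ∀ z ∈ s, G.Adj v z → z ∈ B ∪ T := by
        intro z hz hadj
        by_cases hzT : z ∈ T
        · exact Finset.mem_union_right _ hzT
        · exact Finset.mem_union_left _
            (hclosedB v hv z (Finset.mem_sdiff.mpr ⟨hz, hzT⟩) hadj)
      exact hsimp p (hmem p hp hvp) q (hmem q hq hvq) hvp hvq hpq
    rcases ih _ hcard (B ∪ T) rfl hBNe with hCo | ⟨v, hv, w, hw, hvw, hnadj2, hsv, hsw⟩
    · refine ⟨b, hbB, hlift b hbB ?_⟩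
      intro p hp q hq _ _ hpq
      exact hCo p hp q hq hpq
    · have hone : v ∈ B ∨ w ∈ B := by
        by_contra hcon
        push_neg at hcon
        have hvT : v ∈ T := (Finset.mem_union.mp hv).resolve_left hcon.1
        have hwT : w ∈ T := (Finset.mem_union.mp hw).resolve_left hcon.2
        exact hnadj2 (hclique v hvT w hwT hvw)
      rcases hone with h | h
      · exact ⟨v, h, hlift v h hsv⟩
      · exact ⟨w, h, hlift w h hsw⟩
  obtain ⟨v, hvA, hsimpv⟩ := hArec
  obtain ⟨w, hwB, hsimpw⟩ := hBrec
  refine ⟨v, (Finset.mem_sdiff.mp (Finset.mem_filter.mp hvA).1).1,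
    w, (Finset.mem_sdiff.mp (Finset.mem_filter.mp hwB).1).1,
    (hnoAB v hvA w hwB).2, (hnoAB v hvA w hwB).1, hsimpv, hsimpw⟩

theorem exists_simp [Fintype V] (G : SimpleGraph V) (hch : IsChordalGraph G)
    (s : Finset V) (hs : s.Nonempty) : ∃ v ∈ s, Simp G s v := by
  rcases dirac G hch s hs with hcomp | ⟨v, hv, _, _, _, _, hsimp, _⟩
  · obtain ⟨v, hv⟩ := hs
    exact ⟨v, hv, fun a ha b hb _ _ hne => hcomp a ha b hb hne⟩
  · exact ⟨v, hv, hsimp⟩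

/-! ### Perfect elimination orderings -/

def Peo (G : SimpleGraph V) : List V → Prop
  | [] => True
  | v :: r => (∀ a ∈ r, ∀ b ∈ r, G.Adj v a → G.Adj v b → a ≠ b → G.Adj a b) ∧ Peo G r

lemma peo_split {G : SimpleGraph V} :
    ∀ (l₁ : List V) {l l₂ : List V} {v : V}, Peo G l → l = l₁ ++ v :: l₂ →
      ∀ a ∈ l₂, ∀ b ∈ l₂, G.Adj v a → G.Adj v b → a ≠ b → G.Adj a b := by
  intro l₁
  induction l₁ with
  | nil =>
    intro l l₂ v hp hl
    subst hl
    exact hp.1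
  | cons w l₁ ih =>
    intro l l₂ v hp hl
    subst hl
    exact ih hp.2 rfl

lemma peo_filter {G : SimpleGraph V} (p : V → Bool) :
    ∀ {l : List V}, Peo G l → Peo G (l.filter p) := by
  intro l hl
  induction l with
  | nil => trivial
  | cons v r ih =>
    rw [List.filter_cons]
    by_cases hpv : p v
    · rw [if_pos hpv]
      exact ⟨fun a ha b hb => hl.1 a (List.mem_of_mem_filter ha) b (List.mem_of_mem_filter hb),
        ih hl.2⟩
    · rw [if_neg hpv]
      exact ih hl.2

theorem exists_peo [Fintype V] [DecidableEq V] (G : SimpleGraph V) (hch : IsChordalGraph G)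
    (s : Finset V) : ∃ l : List V, l.Nodup ∧ l.toFinset = s ∧ Peo G l := by
  generalize hn : s.card = n
  induction n using Nat.strong_induction_on generalizing s with
  | _ n ih =>
    rcases Finset.eq_empty_or_nonempty s with rfl | hs
    · exact ⟨[], by simp, by simp, trivial⟩
    · obtain ⟨v, hv, hsimp⟩ := exists_simp G hch s hs
      obtain ⟨l, hnd, htf, hpeo⟩ := ih (s.erase v).card
        (by rw [← hn]; exact Finset.card_erase_lt_of_mem hv) (s.erase v) rfl
      have hmem : ∀ z, z ∈ l ↔ z ∈ s.erase v := by
        intro z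
        rw [← List.mem_toFinset, htf]
      refine ⟨v :: l, ?_, ?_, ?_, hpeo⟩
      · rw [List.nodup_cons]
        exact ⟨fun h => (Finset.mem_erase.mp ((hmem v).mp h)).1 rfl, hnd⟩
      · rw [List.toFinset_cons, htf, Finset.insert_erase hv]
      · intro a ha b hb hva hvb hab
        have ha' : a ∈ s := Finset.mem_of_mem_erase ((hmem a).mp ha)
        have hb' : b ∈ s := Finset.mem_of_mem_erase ((hmem b).mp hb)
        exact hsimp a ha' b hb' hva hvb hab

/-- The neighbors of `v` among a list `r`. -/
noncomputable def nbF (G : SimpleGraph V) (v : V) (r : List V) : Finset V :=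
  letI := Classical.decEq V
  letI := Classical.decPred (fun u => G.Adj v u)
  r.toFinset.filter (fun u => G.Adj v u)

lemma mem_nbF {G : SimpleGraph V} {v u : V} {r : List V} :
    u ∈ nbF G v r ↔ u ∈ r ∧ G.Adj v u := by
  simp [nbF]

/-- Maximum back-degree + 1 along a list. -/
noncomputable def bd (G : SimpleGraph V) : List V → ℕ
  | [] => 0
  | v :: r => max ((nbF G v r).card + 1) (bd G r)

lemma bd_split {G : SimpleGraph V} :
    ∀ (l₁ : List V) {l l₂ : List V} {v : V}, l = l₁ ++ v :: l₂ →
      (nbF G v l₂).card + 1 ≤ bd G l := by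
  intro l₁
  induction l₁ with
  | nil =>
    intro l l₂ v hl
    subst hl
    exact le_max_left _ _
  | cons w l₁ ih =>
    intro l l₂ v hl
    subst hl
    exact le_trans (ih rfl) (le_max_right _ _)

lemma bd_attained {G : SimpleGraph V} :
    ∀ {l : List V}, l ≠ [] → ∃ l₁ v l₂, l = l₁ ++ v :: l₂ ∧
      bd G l = (nbF G v l₂).card + 1 := by
  intro l hl
  induction l with
  | nil => exact absurd rfl hl
  | cons v r ih =>
    by_cases hc : bd G r ≤ (nbF G v r).card + 1
    · exact ⟨[], v, r, rfl, by simp [bd, max_eq_left hc]⟩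
    · push_neg at hc
      have hr : r ≠ [] := by
        intro h
        subst h
        simp [bd] at hc
      obtain ⟨l₁, w, l₂, heq, hbd⟩ := ih hr
      refine ⟨v :: l₁, w, l₂, by rw [List.cons_append, ← heq], ?_⟩
      have hmax : bd G (v :: r) = bd G r := max_eq_right hc.le
      rw [hmax, hbd]

/-! ### Greedy colorings -/

/-- Greedy DP-coloring along a list. -/
lemma greedyDP {G : SimpleGraph V} {W : Type} {H : SimpleGraph W} {L : V → Finset W}
    (C : DPCover G H L) (hW : ∀ v, 0 < (L v).card) :
    ∀ l : List V, l.Nodup →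
      (∀ l₁ v l₂, l = l₁ ++ v :: l₂ → ∃ Cq : Finset V,
        (∀ u ∈ l₂, G.Adj v u → u ∈ Cq) ∧ Cq.card < (L v).card) →
      ∃ f : V → W, (∀ v ∈ l, f v ∈ L v) ∧ ∀ u ∈ l, ∀ v ∈ l, ¬ H.Adj (f u) (f v) := by
  intro l
  induction l with
  | nil =>
    intro _ _
    exact ⟨fun v => (Finset.card_pos.mp (hW v)).choose, by simp, by simp⟩
  | cons v r ih =>
    intro hnd hcond
    have hvr : v ∉ r := (List.nodup_cons.mp hnd).1
    obtain ⟨f, hf1, hf2⟩ := ih (List.nodup_cons.mp hnd).2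
      (fun l₁ w l₂ hl => hcond (v :: l₁) w l₂ (by rw [hl, List.cons_append]))
    obtain ⟨Cq, hCq1, hCq2⟩ := hcond [] v r rfl
    classical
    set Bad := (L v).filter (fun c => ∃ u ∈ r, G.Adj v u ∧ H.Adj (f u) c) with hBad
    have hBadcard : Bad.card ≤ Cq.card := by
      have hw : ∀ c : W, ∃ u : V, c ∈ Bad → u ∈ r ∧ G.Adj v u ∧ H.Adj (f u) c := by
        intro c
        by_cases hc : c ∈ Bad
        · obtain ⟨u, hu, h1, h2⟩ := (Finset.mem_filter.mp hc).2
          exact ⟨u, fun _ => ⟨hu, h1, h2⟩⟩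
        · exact ⟨v, fun h' => absurd h' hc⟩
      choose g hg using hw
      apply Finset.card_le_card_of_injOn g
      · intro c hc
        exact hCq1 _ ((hg c hc).1) ((hg c hc).2.1)
      · intro c hc c' hc' hgc
        have hcv : c ∈ L v := (Finset.mem_filter.mp hc).1
        have hcv' : c' ∈ L v := (Finset.mem_filter.mp hc').1
        have h3' : H.Adj (f (g c)) c' := by rw [hgc]; exact (hg c' hc').2.2
        exact C.matching ((hg c hc).2.1).symm (f (g c)) (hf1 _ ((hg c hc).1)) c hcv c' hcv'
          ((hg c hc).2.2) h3'
    have hlt : Bad.card < (L v).card := lt_of_le_of_lt hBadcard hCq2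
    have hne : ((L v) \ Bad).Nonempty := by
      rw [Finset.sdiff_nonempty]
      intro hsub
      exact absurd (Finset.card_le_card hsub) (not_le.mpr hlt)
    obtain ⟨c, hc⟩ := hne
    obtain ⟨hcL, hcB⟩ := Finset.mem_sdiff.mp hc
    have hnoadj : ∀ u ∈ r, ¬ H.Adj (f u) c := by
      intro u hu hadj
      by_cases hGa : G.Adj v u
      · exact hcB (Finset.mem_filter.mpr ⟨hcL, u, hu, hGa, hadj⟩)
      · have hvu : u ≠ v := fun h => hvr (h ▸ hu)
        exact C.nonadj hvu (fun h2 => hGa h2.symm) (f u) (hf1 u hu) c hcL hadj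
    have hval : ∀ z ∈ r, Function.update f v c z = f z := fun z hz =>
      Function.update_of_ne (fun h : z = v => hvr (h ▸ hz)) _ _
    refine ⟨Function.update f v c, ?_, ?_⟩
    · intro w hw
      rcases List.mem_cons.mp hw with rfl | hw'
      · rw [Function.update_self]
        exact hcL
      · rw [hval w hw']
        exact hf1 w hw'
    · intro u hu w hw
      rcases List.mem_cons.mp hu with rfl | hu' <;> rcases List.mem_cons.mp hw with h | hw'
      · rw [← h, Function.update_self]
        exact H.irrefl
      · rw [Function.update_self, hval w hw']
        exact fun hadj => hnoadj w hw' hadj.symm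
      · subst h
        rw [Function.update_self, hval u hu']
        exact hnoadj u hu'
      · rw [hval u hu', hval w hw']
        exact hf2 u hu' w hw'

/-- Greedy proper coloring along a list. -/
lemma greedyColor {G : SimpleGraph V} (k : ℕ) (hk : 0 < k) :
    ∀ l : List V, l.Nodup →
      (∀ l₁ v l₂, l = l₁ ++ v :: l₂ → ∃ Cq : Finset V,
        (∀ u ∈ l₂, G.Adj v u → u ∈ Cq) ∧ Cq.card < k) →
      ∃ c : V → Fin k, ∀ u ∈ l, ∀ u' ∈ l, G.Adj u u' → c u ≠ c u' := by
  intro l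
  induction l with
  | nil => exact fun _ _ => ⟨fun _ => ⟨0, hk⟩, by simp⟩
  | cons v r ih =>
    intro hnd hcond
    have hvr : v ∉ r := (List.nodup_cons.mp hnd).1
    obtain ⟨c, hc⟩ := ih (List.nodup_cons.mp hnd).2
      (fun l₁ w l₂ hl => hcond (v :: l₁) w l₂ (by rw [hl, List.cons_append]))
    obtain ⟨Cq, hCq1, hCq2⟩ := hcond [] v r rfl
    classical
    have hcompl : ((Cq.image c)ᶜ : Finset (Fin k)).Nonempty := by
      rw [← Finset.card_pos, Finset.card_compl]
      have h1 : (Cq.image c).card < k := lt_of_le_of_lt Finset.card_image_le hCq2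
      have h2 : Fintype.card (Fin k) = k := Fintype.card_fin k
      omega
    obtain ⟨i, hi⟩ := hcompl
    have hinot := Finset.mem_compl.mp hi
    have hval : ∀ z ∈ r, Function.update c v i z = c z := fun z hz =>
      Function.update_of_ne (fun h : z = v => hvr (h ▸ hz)) _ _
    refine ⟨Function.update c v i, ?_⟩
    intro u hu w hw hadj
    rcases List.mem_cons.mp hu with rfl | hu' <;> rcases List.mem_cons.mp hw with h | hw'
    · rw [← h] at hadj
      exact absurd hadj (G.irrefl)
    · rw [Function.update_self, hval w hw']
      exact fun heq => hinot (heq ▸ Finset.mem_image_of_mem c (hCq1 w hw' hadj))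
    · subst h
      rw [Function.update_self, hval u hu']
      exact fun heq => hinot (heq ▸ Finset.mem_image_of_mem c (hCq1 u hu' hadj.symm))
    · rw [hval u hu', hval w hw']
      exact hc u hu' w hw' hadj

/-! ### The canonical cover -/

def canH (G : SimpleGraph V) (j : ℕ) : SimpleGraph (V × Fin j) where
  Adj p q := (p.1 = q.1 ∧ p.2 ≠ q.2) ∨ (G.Adj p.1 q.1 ∧ p.2 = q.2)
  symm := ⟨by
    rintro p q (⟨h1, h2⟩ | ⟨h1, h2⟩)
    · exact Or.inl ⟨h1.symm, h2.symm⟩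
    · exact Or.inr ⟨h1.symm, h2.symm⟩⟩
  loopless := ⟨by rintro p (⟨_, h⟩ | ⟨h, _⟩) <;> simp at h⟩

def canL (j : ℕ) (v : V) : Finset (V × Fin j) := {v} ×ˢ Finset.univ

lemma mem_canL {j : ℕ} {v : V} {w : V × Fin j} : w ∈ canL j v ↔ w.1 = v := by
  obtain ⟨a, b⟩ := w
  simp [canL, eq_comm]

lemma canCover (G : SimpleGraph V) (j : ℕ) : DPCover G (canH G j) (canL j) := by
  constructor
  · intro w
    exact ⟨w.1, mem_canL.mpr rfl, fun v hv => (mem_canL.mp hv).symm⟩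
  · intro v a ha b hb hab
    have h1 : a.1 = b.1 := (mem_canL.mp ha).trans (mem_canL.mp hb).symm
    exact Or.inl ⟨h1, fun h2 => hab (Prod.ext h1 h2)⟩
  · intro u v huv a ha b hb b' hb' h1 h2
    have hne : u ≠ v := huv.ne
    have hau : a.1 = u := mem_canL.mp ha
    have hbv : b.1 = v := mem_canL.mp hb
    have hbv' : b'.1 = v := mem_canL.mp hb'
    rcases h1 with ⟨he, _⟩ | ⟨_, he2⟩
    · exact absurd (hau.symm.trans (he.trans hbv)) hne
    rcases h2 with ⟨he', _⟩ | ⟨_, he2'⟩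
    · exact absurd (hau.symm.trans (he'.trans hbv')) hne
    exact Prod.ext (hbv.trans hbv'.symm) (he2.symm.trans he2')
  · intro u v hne hnadj a ha b hb hadj
    have hau : a.1 = u := mem_canL.mp ha
    have hbv : b.1 = v := mem_canL.mp hb
    rcases hadj with ⟨h1, _⟩ | ⟨h1, _⟩
    · exact hne (hau.symm.trans (h1.trans hbv))
    · rw [hau, hbv] at h1
      exact hnadj h1

lemma canL_card [Fintype V] (j : ℕ) (v : V) : (canL (V := V) j v).card = j := by
  rw [canL, Finset.card_product]
  simp

/-- Extract a proper coloring from an independent transversal of the canonical cover. -/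
lemma canonical_coloring [Fintype V] (G : SimpleGraph V) (j : ℕ)
    (S : Finset (V × Fin j)) (hS : IsIndepFinset (canH G j) S)
    (hcard : S.card = Fintype.card V) :
    ∃ c : V → Fin j, ∀ u v : V, G.Adj u v → c u ≠ c v := by
  classical
  have hsum : ∑ v : V, (S.filter (fun w => w.1 = v)).card = S.card :=
    (Finset.card_eq_sum_card_fiberwise (fun x _ => Finset.mem_univ x.1)).symm
  have hle : ∀ v ∈ Finset.univ, (S.filter (fun w => w.1 = v)).card ≤ 1 := by
    intro v _
    rw [Finset.card_le_one]
    intro a ha b hb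
    obtain ⟨haS, ha1⟩ := Finset.mem_filter.mp ha
    obtain ⟨hbS, hb1⟩ := Finset.mem_filter.mp hb
    by_contra hne
    have h2 : a.2 ≠ b.2 := fun h2 => hne (Prod.ext (ha1.trans hb1.symm) h2)
    exact hS a haS b hbS (Or.inl ⟨ha1.trans hb1.symm, h2⟩)
  have htot : ∑ v : V, (S.filter (fun w => w.1 = v)).card = ∑ _v : V, 1 := by
    rw [hsum, hcard]
    simp
  have hfib : ∀ v : V, (S.filter (fun w => w.1 = v)).card = 1 := fun v =>
    (Finset.sum_eq_sum_iff_of_le hle).mp htot v (Finset.mem_univ v)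
  have hex : ∀ v : V, ∃ i : Fin j, (v, i) ∈ S := by
    intro v
    obtain ⟨w, hw⟩ := Finset.card_pos.mp (by rw [hfib v]; norm_num)
    obtain ⟨hwS, hw1⟩ := Finset.mem_filter.mp hw
    refine ⟨w.2, ?_⟩
    have hvw : (v, w.2) = w := Prod.ext hw1.symm rfl
    rw [hvw]
    exact hwS
  choose col hcol using hex
  refine ⟨col, fun u v hadj heq => ?_⟩
  exact hS (u, col u) (hcol u) (v, col v) (hcol v) (Or.inr ⟨hadj, heq⟩)

/-! ### indepNum and pigeonhole -/

lemma le_indepNum {W : Type} [Fintype W] (H : SimpleGraph W) (S : Finset W)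
    (hS : IsIndepFinset H S) : S.card ≤ _root_.indepNum H := by
  apply le_csSup
  · refine ⟨Fintype.card W, ?_⟩
    rintro n ⟨S', _, rfl⟩
    exact le_of_le_of_eq S'.card_le_univ Finset.card_univ
  · exact ⟨S, hS, rfl⟩

/-- Pigeonhole: some `t'` classes of a `k`-coloring contain at least `t'/k` of the
vertices. -/
lemma largest_classes {k : ℕ} (f : Fin k → ℕ) (t' : ℕ) (ht' : t' ≤ k) :
    ∃ T : Finset (Fin k), T.card = t' ∧
      t' * (∑ i, f i) ≤ k * ∑ i ∈ T, f i := by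
  classical
  have hne : ((Finset.univ : Finset (Fin k)).powersetCard t').Nonempty := by
    rw [Finset.powersetCard_nonempty, Finset.card_univ, Fintype.card_fin]
    exact ht'
  obtain ⟨T, hTmem, hTmax⟩ := Finset.exists_max_image _ (fun T => ∑ i ∈ T, f i) hne
  obtain ⟨hTsub, hTcard⟩ := Finset.mem_powersetCard.mp hTmem
  refine ⟨T, hTcard, ?_⟩
  have hswap : ∀ i ∉ T, ∀ j ∈ T, f i ≤ f j := by
    intro i hi j hj
    have hT' : insert i (T.erase j) ∈ (Finset.univ : Finset (Fin k)).powersetCard t' := by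
      rw [Finset.mem_powersetCard]
      refine ⟨fun z _ => Finset.mem_univ z, ?_⟩
      rw [Finset.card_insert_of_notMem (fun h => hi (Finset.mem_of_mem_erase h)),
        Finset.card_erase_of_mem hj, hTcard]
      have : 1 ≤ T.card := Finset.card_pos.mpr ⟨j, hj⟩
      omega
    have hle := hTmax _ hT'
    rw [Finset.sum_insert (fun h => hi (Finset.mem_of_mem_erase h))] at hle
    have hTe : f j + ∑ z ∈ T.erase j, f z = ∑ z ∈ T, f z := Finset.add_sum_erase T f hj
    omega
  have hsplit : ∑ i, f i = ∑ i ∈ T, f i + ∑ i ∈ Tᶜ, f i :=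
    (Finset.sum_add_sum_compl T f).symm
  have hcompl : ∀ i ∈ Tᶜ, t' * f i ≤ ∑ z ∈ T, f z := by
    intro i hi
    calc t' * f i = ∑ _z ∈ T, f i := by rw [Finset.sum_const, hTcard, smul_eq_mul]
    _ ≤ ∑ z ∈ T, f z := Finset.sum_le_sum (fun z hz => hswap i (Finset.mem_compl.mp hi) z hz)
  have h2 : t' * ∑ i ∈ Tᶜ, f i ≤ (k - t') * ∑ z ∈ T, f z := by
    calc t' * ∑ i ∈ Tᶜ, f i = ∑ i ∈ Tᶜ, t' * f i := Finset.mul_sum _ _ _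
    _ ≤ ∑ _i ∈ Tᶜ, ∑ z ∈ T, f z := Finset.sum_le_sum hcompl
    _ = Tᶜ.card * ∑ z ∈ T, f z := by rw [Finset.sum_const, smul_eq_mul]
    _ = (k - t') * ∑ z ∈ T, f z := by
      rw [Finset.card_compl, hTcard, Fintype.card_fin]
  calc t' * ∑ i, f i = t' * ∑ i ∈ T, f i + t' * ∑ i ∈ Tᶜ, f i := by
        rw [hsplit, Nat.mul_add]
  _ ≤ t' * ∑ i ∈ T, f i + (k - t') * ∑ i ∈ T, f i := Nat.add_le_add_left h2 _
  _ = (t' + (k - t')) * ∑ i ∈ T, f i := (Nat.add_mul _ _ _).symm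
  _ = k * ∑ i ∈ T, f i := by rw [Nat.add_sub_cancel' ht']

end ChordalDP

/-- Every chordal graph is partially DP-nice. -/
theorem partiallyDPNice_of_chordal {V : Type} [Fintype V] (G : SimpleGraph V)
    (h : IsChordalGraph G) : PartiallyDPNice G := by
  classical
  intro t ht1 htm
  rcases Nat.eq_zero_or_pos (Fintype.card V) with hn0 | hnpos
  · rw [hn0]
    simp
  have hm1 : 1 ≤ chiDP G := le_trans ht1 htm
  -- a perfect elimination ordering of all of V
  obtain ⟨l, hnd, htf, hpeo⟩ := ChordalDP.exists_peo G h Finset.univ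
  have hlmem : ∀ z : V, z ∈ l := by
    intro z
    rw [← List.mem_toFinset, htf]
    exact Finset.mem_univ z
  have hlne : l ≠ [] := by
    intro h0
    have hc0 : Fintype.card V = 0 := by
      rw [← Finset.card_univ, ← htf, h0]
      rfl
    omega
  set k := ChordalDP.bd G l with hk
  obtain ⟨l₁, v0, l₂, heq0, hbd0⟩ := ChordalDP.bd_attained (G := G) hlne
  have hk1 : 1 ≤ k := by rw [hk, hbd0]; omega
  -- the clique of size k
  have hv0nb : v0 ∉ ChordalDP.nbF G v0 l₂ :=
    fun hmem => G.irrefl (ChordalDP.mem_nbF.mp hmem).2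
  set K0 := insert v0 (ChordalDP.nbF G v0 l₂) with hK0
  have hK0card : K0.card = k := by
    rw [hK0, Finset.card_insert_of_notMem hv0nb, hk, hbd0]
  have hK0clique : ∀ p ∈ K0, ∀ q ∈ K0, p ≠ q → G.Adj p q := by
    intro p hp q hq hpq
    rcases Finset.mem_insert.mp hp with rfl | hp' <;>
      rcases Finset.mem_insert.mp hq with h | hq'
    · exact absurd h.symm hpq
    · exact (ChordalDP.mem_nbF.mp hq').2
    · subst h
      exact ((ChordalDP.mem_nbF.mp hp').2).symm
    · exact ChordalDP.peo_split l₁ hpeo heq0 p (ChordalDP.mem_nbF.mp hp').1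
        q (ChordalDP.mem_nbF.mp hq').1 (ChordalDP.mem_nbF.mp hp').2
        (ChordalDP.mem_nbF.mp hq').2 hpq
  -- chiDP G ≥ k
  set Cset := {m' : ℕ | ∀ (W : Type) (_ : Fintype W) (H : SimpleGraph W) (L : V → Finset W),
    DPCover G H L → (∀ v, (L v).card = m') →
    ∃ S : Finset W, IsIndepFinset H S ∧ S.card = Fintype.card V} with hCset
  have hmdef : chiDP G = sInf Cset := rfl
  have hsetk : ∀ j ∈ Cset, k ≤ j := by
    intro j hj
    obtain ⟨S, hS, hScard⟩ := hj (V × Fin j) inferInstance (ChordalDP.canH G j)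
      (ChordalDP.canL j) (ChordalDP.canCover G j) (ChordalDP.canL_card j)
    obtain ⟨col, hcol⟩ := ChordalDP.canonical_coloring G j S hS hScard
    have hinj : Set.InjOn col K0 := by
      intro p hp q hq heq
      by_contra hne
      exact hcol p q (hK0clique p hp q hq hne) heq
    calc k = K0.card := hK0card.symm
    _ = (K0.image col).card := (Finset.card_image_of_injOn hinj).symm
    _ ≤ (Finset.univ : Finset (Fin j)).card := Finset.card_le_card (Finset.subset_univ _)
    _ = j := by rw [Finset.card_univ, Fintype.card_fin]
  have hCne : Cset.Nonempty := by
    by_contra hempty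
    rw [Set.not_nonempty_iff_eq_empty] at hempty
    rw [hmdef, hempty, Nat.sInf_empty] at hm1
    omega
  have hkm : k ≤ chiDP G := by
    rw [hmdef]
    exact hsetk _ (Nat.sInf_mem hCne)
  -- proper coloring with k colors
  obtain ⟨col, hcolprop⟩ := ChordalDP.greedyColor (G := G) k hk1 l hnd
    (fun l₁' v l₂' hl => ⟨ChordalDP.nbF G v l₂',
      fun u hu hadj => ChordalDP.mem_nbF.mpr ⟨hu, hadj⟩,
      by have := ChordalDP.bd_split (G := G) l₁' hl; rw [hk]; omega⟩)
  have hcol : ∀ u u', G.Adj u u' → col u ≠ col u' :=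
    fun u u' hadj => hcolprop u (hlmem u) u' (hlmem u') hadj
  -- the largest t' color classes
  set t' := min t k with ht'
  have ht'k : t' ≤ k := min_le_right _ _
  obtain ⟨T, hTcard, hTsum⟩ := ChordalDP.largest_classes
    (fun i => (Finset.univ.filter (fun v => col v = i)).card) t' ht'k
  set U := Finset.univ.filter (fun v => col v ∈ T) with hU
  have hUcard : U.card = ∑ i ∈ T, (Finset.univ.filter (fun v => col v = i)).card := by
    rw [Finset.card_eq_sum_card_fiberwise (f := col) (s := U) (t := T)
      (fun x hx => (Finset.mem_filter.mp hx).2)]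
    apply Finset.sum_congr rfl
    intro i hi
    congr 1
    ext z
    simp only [hU, Finset.mem_filter, Finset.mem_univ, true_and]
    constructor
    · rintro ⟨_, h2⟩
      exact h2
    · intro h2
      exact ⟨h2 ▸ hi, h2⟩
  have hsumall : Fintype.card V = ∑ i : Fin k, (Finset.univ.filter (fun v => col v = i)).card := by
    rw [← Finset.card_univ]
    exact Finset.card_eq_sum_card_fiberwise (fun x _ => Finset.mem_univ _)
  have hmain : t' * Fintype.card V ≤ k * U.card := by
    rw [hsumall, hUcard]
    exact hTsum
  -- cliques inside U have size at most t'
  have hcliqueU : ∀ K : Finset V, (∀ z ∈ K, z ∈ U) →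
      (∀ p ∈ K, ∀ q ∈ K, p ≠ q → G.Adj p q) → K.card ≤ t' := by
    intro K hKU hKcl
    have hinj : Set.InjOn col K := by
      intro p hp q hq heq
      by_contra hne
      exact hcol p q (hKcl p hp q hq hne) heq
    have himg : K.image col ⊆ T := by
      intro i hi
      obtain ⟨z, hz, rfl⟩ := Finset.mem_image.mp hi
      exact (Finset.mem_filter.mp (hKU z hz)).2
    calc K.card = (K.image col).card := (Finset.card_image_of_injOn hinj).symm
    _ ≤ T.card := Finset.card_le_card himg
    _ = t' := hTcard
  -- lower bound for alphaDP
  set Aset := {n : ℕ | ∃ (W : Type) (_ : Fintype W) (H : SimpleGraph W) (L : V → Finset W),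
    DPCover G H L ∧ (∀ v, (L v).card = t) ∧ _root_.indepNum H = n} with hAset
  have hadef : alphaDP G t = sInf Aset := rfl
  have hAne : Aset.Nonempty :=
    ⟨_, V × Fin t, inferInstance, ChordalDP.canH G t, ChordalDP.canL t,
      ChordalDP.canCover G t, ChordalDP.canL_card t, rfl⟩
  have hbound : ∀ x ∈ Aset, U.card ≤ x := by
    rintro x ⟨W, hWinst, H, L, hcover, hcards, hind⟩
    letI := hWinst
    set l' := l.filter (fun z => decide (z ∈ U)) with hl'
    have hl'nd : l'.Nodup := hnd.filter _
    have hl'mem : ∀ z, z ∈ l' ↔ z ∈ U := by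
      intro z
      rw [hl', List.mem_filter]
      constructor
      · intro hz
        simpa using hz.2
      · intro hz
        exact ⟨hlmem z, by simpa using hz⟩
    have hl'tf : l'.toFinset = U := by
      ext z
      rw [List.mem_toFinset, hl'mem]
    have hl'len : l'.length = U.card := by
      rw [← hl'tf]
      exact (List.toFinset_card_of_nodup hl'nd).symm
    have hpeo' : ChordalDP.Peo G l' := ChordalDP.peo_filter _ hpeo
    have hWpos : ∀ v, 0 < (L v).card := fun v => by rw [hcards v]; omega
    have hgcond : ∀ l₁' v l₂', l' = l₁' ++ v :: l₂' → ∃ Cq : Finset V,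
        (∀ u ∈ l₂', G.Adj v u → u ∈ Cq) ∧ Cq.card < (L v).card := by
      intro l₁' v l₂' hl
      refine ⟨ChordalDP.nbF G v l₂',
        fun u hu hadj => ChordalDP.mem_nbF.mpr ⟨hu, hadj⟩, ?_⟩
      rw [hcards v]
      have hvU : v ∈ U := (hl'mem v).mp
        (by rw [hl]; exact List.mem_append_right _ List.mem_cons_self)
      have hsubU : ∀ z ∈ insert v (ChordalDP.nbF G v l₂'), z ∈ U := by
        intro z hz
        rcases Finset.mem_insert.mp hz with rfl | hz'
        · exact hvU
        · apply (hl'mem z).mp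
          rw [hl]
          exact List.mem_append_right _
            (List.mem_cons_of_mem _ (ChordalDP.mem_nbF.mp hz').1)
      have hvnb : v ∉ ChordalDP.nbF G v l₂' :=
        fun hmem => G.irrefl (ChordalDP.mem_nbF.mp hmem).2
      have hcl : ∀ p ∈ insert v (ChordalDP.nbF G v l₂'),
          ∀ q ∈ insert v (ChordalDP.nbF G v l₂'), p ≠ q → G.Adj p q := by
        intro p hp q hq hpq
        rcases Finset.mem_insert.mp hp with rfl | hp' <;>
          rcases Finset.mem_insert.mp hq with hh | hq'
        · exact absurd hh.symm hpq
        · exact (ChordalDP.mem_nbF.mp hq').2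
        · subst hh
          exact ((ChordalDP.mem_nbF.mp hp').2).symm
        · exact ChordalDP.peo_split l₁' hpeo' hl p (ChordalDP.mem_nbF.mp hp').1
            q (ChordalDP.mem_nbF.mp hq').1 (ChordalDP.mem_nbF.mp hp').2
            (ChordalDP.mem_nbF.mp hq').2 hpq
      have hK := hcliqueU _ hsubU hcl
      rw [Finset.card_insert_of_notMem hvnb] at hK
      have htt' : t' ≤ t := min_le_left _ _
      omega
    obtain ⟨f, hf1, hf2⟩ := ChordalDP.greedyDP hcover hWpos l' hl'nd hgcond
    have hinjf : Set.InjOn f l'.toFinset := by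
      intro p hp q hq heq
      rw [Finset.mem_coe, List.mem_toFinset] at hp hq
      obtain ⟨v1, _, huniq⟩ := hcover.partition (f p)
      have h1 := huniq p (hf1 p hp)
      have h2 := huniq q (by rw [heq]; exact hf1 q hq)
      rw [h1, h2]
    have hSind : IsIndepFinset H (l'.toFinset.image f) := by
      intro a ha b hb
      obtain ⟨u, hu, rfl⟩ := Finset.mem_image.mp ha
      obtain ⟨u', hu', rfl⟩ := Finset.mem_image.mp hb
      exact hf2 u (List.mem_toFinset.mp hu) u' (List.mem_toFinset.mp hu')
    have hScard : (l'.toFinset.image f).card = U.card := by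
      rw [Finset.card_image_of_injOn hinjf, hl'tf]
    calc U.card = (l'.toFinset.image f).card := hScard.symm
    _ ≤ _root_.indepNum H := ChordalDP.le_indepNum H _ hSind
    _ = x := hind
  have halpha : U.card ≤ alphaDP G t := by
    rw [hadef]
    exact hbound _ (Nat.sInf_mem hAne)
  -- final arithmetic
  have hnat : t * Fintype.card V ≤ chiDP G * alphaDP G t := by
    rcases le_total t k with htk | hkt
    · have ht't : t' = t := min_eq_left htk
      calc t * Fintype.card V = t' * Fintype.card V := by rw [ht't]
      _ ≤ k * U.card := hmain
      _ ≤ chiDP G * alphaDP G t := Nat.mul_le_mul hkm halpha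
    · have ht'k2 : t' = k := min_eq_right hkt
      have hnU : Fintype.card V ≤ U.card := by
        rw [ht'k2] at hmain
        exact Nat.le_of_mul_le_mul_left hmain hk1
      calc t * Fintype.card V ≤ chiDP G * U.card := Nat.mul_le_mul htm hnU
      _ ≤ chiDP G * alphaDP G t := Nat.mul_le_mul_left _ halpha
  have hmpos : (0 : ℚ) < (chiDP G : ℚ) := by
    exact_mod_cast hm1
  rw [div_le_iff₀ hmpos]
  have : ((t * Fintype.card V : ℕ) : ℚ) ≤ ((chiDP G * alphaDP G t : ℕ) : ℚ) := by
    exact_mod_cast hnat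
  push_cast at this
  linarith
end

section
/- Let G be a finite simple graph and suppose there exists a chordal graph M on the same vertex set as G with E(G) ⊆ E(M) and clique number ω(M) = χ_DP(G) (equivalently, χ_DP(G) = tw(G) + 1, where tw denotes treewidth). Then G is partially DP-nice. -/
open SimpleGraph

namespace DPNice

variable {V : Type} {M : SimpleGraph V} {B : Finset V} {a b c x s : V}

/-- Reachability within a finset of vertices. -/
def ReachIn (M : SimpleGraph V) (B : Finset V) (a b : V) : Prop :=
  ∃ w : M.Walk a b, ∀ x ∈ w.support, x ∈ B

lemma ReachIn.refl (ha : a ∈ B) : ReachIn M B a a :=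
  ⟨Walk.nil, by simpa using ha⟩

lemma ReachIn.mem_left (h : ReachIn M B a b) : a ∈ B := by
  obtain ⟨w, hw⟩ := h; exact hw a w.start_mem_support

lemma ReachIn.mem_right (h : ReachIn M B a b) : b ∈ B := by
  obtain ⟨w, hw⟩ := h; exact hw b w.end_mem_support

lemma ReachIn.symm (h : ReachIn M B a b) : ReachIn M B b a := by
  obtain ⟨w, hw⟩ := h
  exact ⟨w.reverse, fun x hx => hw x (by simpa [Walk.support_reverse] using hx)⟩

lemma ReachIn.trans (h1 : ReachIn M B a b) (h2 : ReachIn M B b c) : ReachIn M B a c := by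
  obtain ⟨w1, hw1⟩ := h1; obtain ⟨w2, hw2⟩ := h2
  refine ⟨w1.append w2, fun x hx => ?_⟩
  rcases (Walk.mem_support_append_iff _ _).mp hx with h | h
  · exact hw1 x h
  · exact hw2 x h

lemma ReachIn.adj (hadj : M.Adj a b) (ha : a ∈ B) (hb : b ∈ B) : ReachIn M B a b :=
  ⟨Walk.cons hadj Walk.nil, by simp [ha, hb]⟩

lemma reachIn_of_mem_support {w : M.Walk a b} (hw : ∀ y ∈ w.support, y ∈ B)
    (hx : x ∈ w.support) : ReachIn M B a x := by
  induction w with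
  | nil => rw [Walk.mem_support_nil_iff] at hx; subst hx; exact ReachIn.refl (by simpa using hw x (by simp))
  | @cons u c' b' h p ih =>
    rcases List.mem_cons.mp (by simpa [Walk.support_cons] using hx) with rfl | hx'
    · exact ReachIn.refl (hw x (Walk.start_mem_support _))
    · have hc : c' ∈ B := hw c' (by simp)
      have hu : u ∈ B := hw u (Walk.start_mem_support _)
      have := ih (fun y hy => hw y (by simp [hy])) hx'
      exact (ReachIn.adj h hu hc).trans this

/-- If there is a walk from `a` to `b` inside `B ∪ {s}` but no walk inside `B`,
then `s` has a neighbor reachable from `a` within `B`. -/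
lemma exists_boundary_neighbor (hs : s ∉ B) (ha : a ∈ B)
    (w : M.Walk a b) (hw : ∀ y ∈ w.support, y = s ∨ y ∈ B)
    (hnr : ¬ ReachIn M B a b) : ∃ x ∈ B, M.Adj x s ∧ ReachIn M B a x := by
  induction w with
  | nil => exact absurd (ReachIn.refl ha) hnr
  | @cons u c' b' h p ih =>
    by_cases hcs : c' = s
    · subst hcs
      exact ⟨u, ha, h, ReachIn.refl ha⟩
    · have hc : c' ∈ B := by
        rcases hw c' (by simp) with h' | h'
        · exact absurd h' hcs
        · exact h'
      have hnr' : ¬ ReachIn M B c' b' := fun hr => hnr ((ReachIn.adj h ha hc).trans hr)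
      obtain ⟨x, hxB, hxs, hxr⟩ := ih hc (fun y hy => hw y (by simp [hy])) hnr'
      exact ⟨x, hxB, hxs, (ReachIn.adj h ha hc).trans hxr⟩


lemma edges_of_length_one {w : M.Walk x y} (h : w.length = 1) : w.edges = [s(x, y)] := by
  cases w with
  | nil => simp at h
  | cons hadj p =>
    cases p with
    | nil => simp
    | cons h' q => simp [Walk.length_cons] at h

/-- A minimum-length walk whose support satisfies `P`. -/
lemma exists_min_path (M : SimpleGraph V) (P : V → Prop) {s s' : V}
    (h : ∃ w : M.Walk s s', ∀ z ∈ w.support, P z) :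
    ∃ w : M.Walk s s', w.IsPath ∧ (∀ z ∈ w.support, P z) ∧
      ∀ w' : M.Walk s s', (∀ z ∈ w'.support, P z) → w.length ≤ w'.length := by
  classical
  set N : Set ℕ := {n | ∃ w : M.Walk s s', (∀ z ∈ w.support, P z) ∧ w.length = n} with hN
  have hNne : N.Nonempty := by obtain ⟨w, hw⟩ := h; exact ⟨w.length, w, hw, rfl⟩
  obtain ⟨w0, hw0, hlen⟩ := Nat.sInf_mem hNne
  refine ⟨w0.bypass, Walk.bypass_isPath w0, fun z hz => hw0 z (Walk.support_bypass_subset w0 hz), fun w' hw' => ?_⟩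
  have h1 : w0.bypass.length ≤ sInf N := hlen ▸ Walk.length_bypass_le w0
  have h2 : sInf N ≤ w'.length := Nat.sInf_le ⟨w', hw', rfl⟩
  omega

/-- A chord of a minimum-length constrained path gives a contradiction. -/
lemma no_chord_of_min (P : V → Prop) (w : M.Walk s s')
    (hP : ∀ z ∈ w.support, P z)
    (hmin : ∀ w' : M.Walk s s', (∀ z ∈ w'.support, P z) → w.length ≤ w'.length)
    (hx : x ∈ w.support) (hy : y ∈ w.support) (hadj : M.Adj x y)
    (hne : s(x, y) ∉ w.edges) : False := by
  classical
  set t1 := w.takeUntil x hx with ht1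
  set d1 := w.dropUntil x hx with hd1
  have hspec : t1.append d1 = w := w.take_spec hx
  have hmem : y ∈ t1.support ∨ y ∈ d1.support := by
    rw [← hspec] at hy
    exact (Walk.mem_support_append_iff _ _).mp hy
  have hlen : t1.length + d1.length = w.length := by
    rw [← hspec, Walk.length_append]
  rcases hmem with hyt | hyd
  · -- y occurs before x : use edge y→x
    set t2 := t1.takeUntil y hyt with ht2
    set r2 := t1.dropUntil y hyt with hr2
    have hspec2 : t2.append r2 = t1 := t1.take_spec hyt
    have hlen2 : t2.length + r2.length = t1.length := by rw [← hspec2, Walk.length_append]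
    set wnew : M.Walk s s' := t2.append (Walk.cons hadj.symm d1) with hwnew
    have hPnew : ∀ z ∈ wnew.support, P z := by
      intro z hz
      have key : ∀ z', z' ∈ t1.support ∨ z' ∈ d1.support → P z' := by
        intro z' hz'
        refine hP z' ?_
        rw [← hspec]
        exact (Walk.mem_support_append_iff _ _).mpr hz'
      rcases (Walk.mem_support_append_iff _ _).mp hz with h' | h'
      · exact key z (Or.inl (Walk.support_takeUntil_subset _ hyt h'))
      · rcases List.mem_cons.mp (by simpa [Walk.support_cons] using h') with rfl | h''
        · exact key z (Or.inl (Walk.support_takeUntil_subset _ hyt (Walk.end_mem_support t2)))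
        · exact key z (Or.inr h'')
    have hlnew : wnew.length = t2.length + 1 + d1.length := by
      simp [hwnew, Walk.length_append, Walk.length_cons]; omega
    have := hmin wnew hPnew
    have hr2len : r2.length ≤ 1 := by omega
    interval_cases h : r2.length
    · exact hadj.ne' (Walk.eq_of_length_eq_zero h)
    · have : s(y, x) ∈ w.edges := by
        rw [← hspec]
        rw [Walk.edges_append]
        refine List.mem_append_left _ ?_
        rw [← hspec2, Walk.edges_append]
        refine List.mem_append_right _ ?_
        rw [edges_of_length_one h]
        simp
      exact hne (by rwa [Sym2.eq_swap] at this)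
  · -- y occurs after x : use edge x→y
    set t2 := d1.takeUntil y hyd with ht2
    set r2 := d1.dropUntil y hyd with hr2
    have hspec2 : t2.append r2 = d1 := d1.take_spec hyd
    have hlen2 : t2.length + r2.length = d1.length := by rw [← hspec2, Walk.length_append]
    set wnew : M.Walk s s' := t1.append (Walk.cons hadj r2) with hwnew
    have hPnew : ∀ z ∈ wnew.support, P z := by
      intro z hz
      have key : ∀ z', z' ∈ t1.support ∨ z' ∈ d1.support → P z' := by
        intro z' hz'
        refine hP z' ?_
        rw [← hspec]
        exact (Walk.mem_support_append_iff _ _).mpr hz'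
      rcases (Walk.mem_support_append_iff _ _).mp hz with h' | h'
      · exact key z (Or.inl h')
      · rcases List.mem_cons.mp (by simpa [Walk.support_cons] using h') with rfl | h''
        · exact key z (Or.inl (Walk.end_mem_support t1))
        · refine key z (Or.inr ?_)
          rw [← hspec2]
          exact (Walk.mem_support_append_iff _ _).mpr (Or.inr h'')
    have hlnew : wnew.length = t1.length + 1 + r2.length := by
      simp [hwnew, Walk.length_append, Walk.length_cons]; omega
    have := hmin wnew hPnew
    have ht2len : t2.length ≤ 1 := by omega
    interval_cases h : t2.length
    · exact hadj.ne (Walk.eq_of_length_eq_zero h)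
    · have : s(x, y) ∈ w.edges := by
        rw [← hspec, Walk.edges_append]
        refine List.mem_append_right _ ?_
        rw [← hspec2, Walk.edges_append]
        refine List.mem_append_left _ ?_
        rw [edges_of_length_one h]
        simp
      exact hne this
  

def ChordalOn (M : SimpleGraph V) (A : Finset V) : Prop :=
  ∀ ⦃v : V⦄ (c : M.Walk v v), c.IsCycle → 4 ≤ c.length → (∀ x ∈ c.support, x ∈ A) →
    ∃ a b : V, a ∈ c.support ∧ b ∈ c.support ∧ M.Adj a b ∧ s(a, b) ∉ c.edges

def SimplicialOn (M : SimpleGraph V) (A : Finset V) (v : V) : Prop :=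
  ∀ p ∈ A, ∀ q ∈ A, M.Adj v p → M.Adj v q → p ≠ q → M.Adj p q

lemma ChordalOn.mono {A B : Finset V} (h : ChordalOn M A) (hBA : B ⊆ A) : ChordalOn M B :=
  fun _ c hc hl hsup => h c hc hl (fun x hx => hBA (hsup x hx))

lemma not_reachIn_pair {a b : V} (hne : a ≠ b) (hadj : ¬ M.Adj a b) {B : Finset V}
    (hB : ∀ x ∈ B, x = a ∨ x = b) : ¬ ReachIn M B a b := by
  rintro ⟨w, hw⟩
  cases w with
  | nil => exact hne rfl
  | @cons _ c _ h p =>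
    rcases hB c (hw c (by simp)) with rfl | rfl
    · exact M.irrefl h
    · exact hadj h

theorem dirac_main : ∀ (n : ℕ) (A : Finset V), ChordalOn M A → A.card ≤ n →
    (∀ p ∈ A, ∀ q ∈ A, p ≠ q → M.Adj p q) ∨
    (∃ v ∈ A, ∃ u ∈ A, v ≠ u ∧ ¬ M.Adj v u ∧ SimplicialOn M A v ∧ SimplicialOn M A u) := by
  intro n
  induction n with
  | zero =>
    intro A _ hcard
    left
    have : A = ∅ := Finset.card_eq_zero.mp (Nat.le_antisymm hcard (Nat.zero_le _))
    subst this
    simp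
  | succ n ih =>
    intro A hA hcard
    classical
    by_cases hcl : ∀ p ∈ A, ∀ q ∈ A, p ≠ q → M.Adj p q
    · exact Or.inl hcl
    right
    push_neg at hcl
    obtain ⟨a, ha, b, hb, hab, hnadjab⟩ := hcl
    -- minimal separator S
    set 𝒮 := A.powerset.filter
      (fun S => a ∉ S ∧ b ∉ S ∧ ¬ ReachIn M (A \ S) a b) with h𝒮
    have h𝒮ne : 𝒮.Nonempty := by
      refine ⟨A \ {a, b}, Finset.mem_filter.mpr ⟨Finset.mem_powerset.mpr (Finset.sdiff_subset), ?_, ?_, ?_⟩⟩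
      · simp
      · simp
      · refine not_reachIn_pair hab hnadjab ?_
        intro x hx
        have hx1 := Finset.mem_sdiff.mp hx
        have hx2 := hx1.2
        rcases Finset.mem_sdiff.mp hx with ⟨hxA, hxn⟩
        by_contra hcon
        push_neg at hcon
        exact hxn (Finset.mem_sdiff.mpr ⟨hxA, by simp [hcon.1, hcon.2]⟩)
    obtain ⟨S, hS𝒮, hSmin⟩ := Finset.exists_min_image 𝒮 Finset.card h𝒮ne
    rw [h𝒮, Finset.mem_filter, Finset.mem_powerset] at hS𝒮
    obtain ⟨hSA, haS, hbS, hnsep⟩ := hS𝒮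
    set D := A \ S with hD
    have haD : a ∈ D := Finset.mem_sdiff.mpr ⟨ha, haS⟩
    have hbD : b ∈ D := Finset.mem_sdiff.mpr ⟨hb, hbS⟩
    set Ca := D.filter (fun x => ReachIn M D a x) with hCa
    set Cb := D.filter (fun x => ReachIn M D b x) with hCb
    have haCa : a ∈ Ca := Finset.mem_filter.mpr ⟨haD, ReachIn.refl haD⟩
    have hbCb : b ∈ Cb := Finset.mem_filter.mpr ⟨hbD, ReachIn.refl hbD⟩
    have hCaD : Ca ⊆ D := Finset.filter_subset _ _
    have hCbD : Cb ⊆ D := Finset.filter_subset _ _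
    have hdisj : ∀ x, x ∈ Ca → x ∈ Cb → False := by
      intro x h1 h2
      exact hnsep ((Finset.mem_filter.mp h1).2.trans ((Finset.mem_filter.mp h2).2.symm))
    have hcloseA : ∀ x ∈ Ca, ∀ y ∈ D, M.Adj x y → y ∈ Ca := by
      intro x hx y hy hxy
      rcases Finset.mem_filter.mp hx with ⟨hxD, hxr⟩
      exact Finset.mem_filter.mpr ⟨hy, hxr.trans (ReachIn.adj hxy hxD hy)⟩
    have hcloseB : ∀ x ∈ Cb, ∀ y ∈ D, M.Adj x y → y ∈ Cb := by
      intro x hx y hy hxy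
      rcases Finset.mem_filter.mp hx with ⟨hxD, hxr⟩
      exact Finset.mem_filter.mpr ⟨hy, hxr.trans (ReachIn.adj hxy hxD hy)⟩
    have cross : ∀ u v, u ∈ Ca → v ∈ Cb → M.Adj u v → False := by
      intro u v hu hv huv
      exact hdisj v (hcloseA u hu v (hCbD hv) huv) hv
    -- every s ∈ S has neighbors in both components
    have hbound : ∀ s ∈ S, (∃ x ∈ Ca, M.Adj s x) ∧ (∃ x ∈ Cb, M.Adj s x) := by
      intro s hs
      have hsD : s ∉ D := fun h => (Finset.mem_sdiff.mp h).2 hs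
      have hre : ReachIn M (A \ S.erase s) a b := by
        by_contra hcon
        have hmem : S.erase s ∈ 𝒮 := by
          refine Finset.mem_filter.mpr ⟨Finset.mem_powerset.mpr
            ((Finset.erase_subset _ _).trans hSA), ?_, ?_, hcon⟩
          · exact fun h => haS (Finset.mem_of_mem_erase h)
          · exact fun h => hbS (Finset.mem_of_mem_erase h)
        have h1 := hSmin _ hmem
        have h2 : (S.erase s).card < S.card := Finset.card_erase_lt_of_mem hs
        omega
      obtain ⟨w, hw⟩ := hre
      have hsupp : ∀ y ∈ w.support, y = s ∨ y ∈ D := by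
        intro y hy
        rcases Finset.mem_sdiff.mp (hw y hy) with ⟨hyA, hyn⟩
        by_cases hys : y = s
        · exact Or.inl hys
        · exact Or.inr (Finset.mem_sdiff.mpr ⟨hyA, fun h => hyn (Finset.mem_erase.mpr ⟨hys, h⟩)⟩)
      constructor
      · obtain ⟨x, hxD, hxs, hxr⟩ := exists_boundary_neighbor hsD haD w hsupp hnsep
        exact ⟨x, Finset.mem_filter.mpr ⟨hxD, hxr⟩, hxs.symm⟩
      · have hnsep' : ¬ ReachIn M D b a := fun h => hnsep h.symm
        obtain ⟨x, hxD, hxs, hxr⟩ := exists_boundary_neighbor hsD hbD w.reverse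
          (fun y hy => hsupp y (by simpa [Walk.support_reverse] using hy)) hnsep'
        exact ⟨x, Finset.mem_filter.mpr ⟨hxD, hxr⟩, hxs.symm⟩
    -- S is a clique
    have hSclq : ∀ s ∈ S, ∀ s' ∈ S, s ≠ s' → M.Adj s s' := by
      intro s hs s' hs' hss'
      by_contra hnadj'
      obtain ⟨xa, hxa, hxadj⟩ := (hbound s hs).1
      obtain ⟨ya, hya, hyadj⟩ := (hbound s' hs').1
      obtain ⟨xb, hxb, hxadjb⟩ := (hbound s hs).2
      obtain ⟨yb, hyb, hyadjb⟩ := (hbound s' hs').2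
      -- min constrained path through Ca
      have hexA : ∃ w : M.Walk s s', ∀ z ∈ w.support, z = s ∨ z = s' ∨ z ∈ Ca := by
        have hr : ReachIn M Ca xa ya := by
          have h1 : ReachIn M D xa ya :=
            ((Finset.mem_filter.mp hxa).2.symm).trans (Finset.mem_filter.mp hya).2
          obtain ⟨w, hw⟩ := h1
          exact ⟨w, fun z hz => Finset.mem_filter.mpr ⟨hw z hz,
            (Finset.mem_filter.mp hxa).2.trans (reachIn_of_mem_support hw hz)⟩⟩
        obtain ⟨wm, hwm⟩ := hr
        refine ⟨Walk.cons hxadj (wm.append (Walk.cons hyadj.symm Walk.nil)), ?_⟩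
        intro z hz
        rcases (by simpa [Walk.support_cons] using hz :
            z = s ∨ z ∈ wm.support ∨ z = ya ∨ z = s') with rfl | h' | rfl | rfl
        · exact Or.inl rfl
        · exact Or.inr (Or.inr (hwm z h'))
        · exact Or.inr (Or.inr (hwm _ wm.end_mem_support))
        · exact Or.inr (Or.inl rfl)
      have hexB : ∃ w : M.Walk s s', ∀ z ∈ w.support, z = s ∨ z = s' ∨ z ∈ Cb := by
        have hr : ReachIn M Cb xb yb := by
          have h1 : ReachIn M D xb yb :=
            ((Finset.mem_filter.mp hxb).2.symm).trans (Finset.mem_filter.mp hyb).2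
          obtain ⟨w, hw⟩ := h1
          exact ⟨w, fun z hz => Finset.mem_filter.mpr ⟨hw z hz,
            (Finset.mem_filter.mp hxb).2.trans (reachIn_of_mem_support hw hz)⟩⟩
        obtain ⟨wm, hwm⟩ := hr
        refine ⟨Walk.cons hxadjb (wm.append (Walk.cons hyadjb.symm Walk.nil)), ?_⟩
        intro z hz
        rcases (by simpa [Walk.support_cons] using hz :
            z = s ∨ z ∈ wm.support ∨ z = yb ∨ z = s') with rfl | h' | rfl | rfl
        · exact Or.inl rfl
        · exact Or.inr (Or.inr (hwm z h'))
        · exact Or.inr (Or.inr (hwm _ wm.end_mem_support))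
        · exact Or.inr (Or.inl rfl)
      obtain ⟨wA, hwApath, hwAP, hwAmin⟩ := exists_min_path M _ hexA
      obtain ⟨wB, hwBpath, hwBP, hwBmin⟩ := exists_min_path M _ hexB
      have hlen2 : ∀ (w : M.Walk s s'), 2 ≤ w.length := by
        intro w
        rcases Nat.lt_or_ge w.length 2 with h | h
        · interval_cases h' : w.length
          · exact absurd (Walk.eq_of_length_eq_zero h') hss'
          · exact absurd (w.adj_of_mem_edges (by rw [edges_of_length_one h']; simp)) hnadj'
        · exact h
      have hwA2 := hlen2 wA
      have hwB2 := hlen2 wB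
      -- the cycle
      set c : M.Walk s s := wA.append wB.reverse with hc
      have hint : ∀ z, z ∈ wA.support → z ∈ wB.support → z = s ∨ z = s' := by
        intro z h1 h2
        rcases hwAP z h1 with h | h | h
        · exact Or.inl h
        · exact Or.inr h
        rcases hwBP z h2 with h' | h' | h'
        · exact Or.inl h'
        · exact Or.inr h'
        · exact absurd (hdisj z h h') (fun f => f)
      have hsmem : s ∈ wB.support := wB.start_mem_support
      have hs'mem : s' ∈ wB.support := wB.end_mem_support
      have hsmemA : s ∈ wA.support := wA.start_mem_support
      have hs'memA : s' ∈ wA.support := wA.end_mem_support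
      have htrail : c.IsTrail := by
        rw [Walk.isTrail_def, hc, Walk.edges_append]
        refine List.Nodup.append hwApath.isTrail.edges_nodup
          (Walk.IsTrail.reverse _ hwBpath.isTrail).edges_nodup ?_
        intro e heA heB
        have heB' : e ∈ wB.edges := by
          rw [Walk.edges_reverse, List.mem_reverse] at heB
          exact heB
        induction e using Sym2.ind with
        | _ u v =>
          have hu1 := wA.fst_mem_support_of_mem_edges heA
          have hv1 := wA.snd_mem_support_of_mem_edges heA
          have hu2 := wB.fst_mem_support_of_mem_edges heB'
          have hv2 := wB.snd_mem_support_of_mem_edges heB'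
          have hadjuv := wA.adj_of_mem_edges heA
          rcases hint u hu1 hu2 with rfl | rfl <;> rcases hint v hv1 hv2 with rfl | rfl
          · exact M.irrefl hadjuv
          · exact hnadj' hadjuv
          · exact hnadj' hadjuv.symm
          · exact M.irrefl hadjuv
      have hclen : c.length = wA.length + wB.length := by
        rw [hc, Walk.length_append, Walk.length_reverse]
      have hcyc : c.IsCycle := by
        rw [Walk.isCycle_def]
        refine ⟨htrail, ?_, ?_⟩
        · intro h
          have : c.length = 0 := by rw [h]; rfl
          omega
        · have htl : c.support.tail = wA.support.tail ++ wB.reverse.support.tail := by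
            rw [hc, Walk.support_append, List.tail_append_of_ne_nil (Walk.support_ne_nil _)]
          rw [htl]
          have hAnodup : wA.support.Nodup := hwApath.support_nodup
          have hBnodup : wB.reverse.support.Nodup := hwBpath.reverse.support_nodup
          refine List.Nodup.append hAnodup.tail hBnodup.tail ?_
          intro z hz1 hz2
          have hz1' : z ∈ wA.support := List.mem_of_mem_tail hz1
          have hz2' : z ∈ wB.support := by
            have := List.mem_of_mem_tail hz2
            rwa [Walk.support_reverse, List.mem_reverse] at this
          have hzs : z ≠ s := by
            intro rfl'
            subst rfl'
            have := wA.support_eq_cons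
            rw [this] at hAnodup
            exact (List.nodup_cons.mp hAnodup).1 (by rwa [this, List.tail_cons] at hz1)
          have hzs' : z ≠ s' := by
            intro rfl'
            subst rfl'
            have := wB.reverse.support_eq_cons
            rw [this] at hBnodup
            exact (List.nodup_cons.mp hBnodup).1 (by rwa [this, List.tail_cons] at hz2)
          rcases hint z hz1' hz2' with h | h
          · exact hzs h
          · exact hzs' h
      have hsupA : ∀ z ∈ c.support, z ∈ A := by
        intro z hz
        rcases (Walk.mem_support_append_iff _ _).mp (by rwa [hc] at hz) with h | h
        · rcases hwAP z h with rfl | rfl | h'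
          · exact hSA hs
          · exact hSA hs'
          · exact (Finset.mem_sdiff.mp (hCaD h')).1
        · rw [Walk.support_reverse, List.mem_reverse] at h
          rcases hwBP z h with rfl | rfl | h'
          · exact hSA hs
          · exact hSA hs'
          · exact (Finset.mem_sdiff.mp (hCbD h')).1
      obtain ⟨x, y, hxs, hys, hadjxy, hnexy⟩ := hA c hcyc (by omega) hsupA
      have hmemsplit : ∀ z, z ∈ c.support → z ∈ wA.support ∨ z ∈ wB.support := by
        intro z hz
        rcases (Walk.mem_support_append_iff _ _).mp (by rwa [hc] at hz) with h | h
        · exact Or.inl h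
        · rw [Walk.support_reverse, List.mem_reverse] at h
          exact Or.inr h
      have hneA : s(x, y) ∉ wA.edges := by
        intro h
        exact hnexy (by rw [hc, Walk.edges_append]; exact List.mem_append_left _ h)
      have hneB : s(x, y) ∉ wB.edges := by
        intro h
        refine hnexy ?_
        rw [hc, Walk.edges_append]
        refine List.mem_append_right _ ?_
        rw [Walk.edges_reverse, List.mem_reverse]
        exact h
      have honlyA : ∀ z, z ∈ wA.support → z ∉ wB.support → z ∈ Ca := by
        intro z h1 h2
        rcases hwAP z h1 with rfl | rfl | h
        · exact absurd hsmem h2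
        · exact absurd hs'mem h2
        · exact h
      have honlyB : ∀ z, z ∈ wB.support → z ∉ wA.support → z ∈ Cb := by
        intro z h1 h2
        rcases hwBP z h1 with rfl | rfl | h
        · exact absurd hsmemA h2
        · exact absurd hs'memA h2
        · exact h
      by_cases hxA : x ∈ wA.support <;> by_cases hyA : y ∈ wA.support
      · exact no_chord_of_min _ wA hwAP hwAmin hxA hyA hadjxy hneA
      · have hyB : y ∈ wB.support := (hmemsplit y hys).resolve_left hyA
        by_cases hxB : x ∈ wB.support
        · exact no_chord_of_min _ wB hwBP hwBmin hxB hyB hadjxy hneB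
        · exact cross x y (honlyA x hxA hxB) (honlyB y hyB hyA) hadjxy
      · have hxB : x ∈ wB.support := (hmemsplit x hxs).resolve_left hxA
        by_cases hyB : y ∈ wB.support
        · exact no_chord_of_min _ wB hwBP hwBmin hxB hyB hadjxy hneB
        · exact cross y x (honlyA y hyA hyB) (honlyB x hxB hxA) hadjxy.symm
      · have hxB : x ∈ wB.support := (hmemsplit x hxs).resolve_left hxA
        have hyB : y ∈ wB.support := (hmemsplit y hys).resolve_left hyA
        exact no_chord_of_min _ wB hwBP hwBmin hxB hyB hadjxy hneB
    -- recurse on components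
    have hcompsim : ∀ (C : Finset V), C ⊆ D →
        (∀ x ∈ C, ∀ y ∈ D, M.Adj x y → y ∈ C) → C.Nonempty →
        (∃ z ∈ A, z ∉ C ∪ S) →
        ∃ v ∈ C, SimplicialOn M A v := by
      intro C hCD hclose hCne hzout
      set A1 := C ∪ S with hA1
      obtain ⟨z, hzA, hzn⟩ := hzout
      have hA1sub : A1 ⊆ A := by
        intro x hx
        rcases Finset.mem_union.mp hx with h | h
        · exact (Finset.mem_sdiff.mp (hCD h)).1
        · exact hSA h
      have hcard1 : A1.card ≤ n := by
        have h1 : A1 ⊆ A.erase z := by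
          intro x hx
          exact Finset.mem_erase.mpr ⟨fun h => hzn (h ▸ hx), hA1sub hx⟩
        have h2 := Finset.card_le_card h1
        have h3 := Finset.card_erase_of_mem hzA
        have h4 : 1 ≤ A.card := Finset.card_pos.mpr ⟨z, hzA⟩
        omega
      have hNA : ∀ x ∈ C, ∀ y ∈ A, M.Adj x y → y ∈ A1 := by
        intro x hx y hy hxy
        by_cases hyS : y ∈ S
        · exact Finset.mem_union_right _ hyS
        · exact Finset.mem_union_left _ (hclose x hx y (Finset.mem_sdiff.mpr ⟨hy, hyS⟩) hxy)
      have hsim : ∀ x ∈ C, SimplicialOn M A1 x → SimplicialOn M A x := by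
        intro x hx hs p hp q hq hxp hxq hpq
        exact hs p (hNA x hx p hp hxp) q (hNA x hx q hq hxq) hxp hxq hpq
      obtain ⟨c0, hc0⟩ := hCne
      rcases ih A1 (hA.mono hA1sub) hcard1 with hclq | ⟨v, hv, u, hu, hvu, hnadj2, hsv, hsu⟩
      · exact ⟨c0, hc0, hsim c0 hc0 (fun p hp q hq _ _ hpq => hclq p hp q hq hpq)⟩
      · by_cases hvS : v ∈ S
        · have huS : u ∉ S := fun h => hnadj2 (hSclq v hvS u h hvu)
          have huC : u ∈ C := (Finset.mem_union.mp hu).resolve_right huS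
          exact ⟨u, huC, hsim u huC hsu⟩
        · have hvC : v ∈ C := (Finset.mem_union.mp hv).resolve_right hvS
          exact ⟨v, hvC, hsim v hvC hsv⟩
    have hbCa : b ∉ Ca ∪ S := by
      intro h
      rcases Finset.mem_union.mp h with h | h
      · exact hnsep (Finset.mem_filter.mp h).2
      · exact hbS h
    have haCb : a ∉ Cb ∪ S := by
      intro h
      rcases Finset.mem_union.mp h with h | h
      · exact hdisj a haCa h
      · exact haS h
    obtain ⟨va, hvaCa, hvasim⟩ := hcompsim Ca hCaD hcloseA ⟨a, haCa⟩ ⟨b, hb, hbCa⟩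
    obtain ⟨vb, hvbCb, hvbsim⟩ := hcompsim Cb hCbD hcloseB ⟨b, hbCb⟩ ⟨a, ha, haCb⟩
    refine ⟨va, (Finset.mem_sdiff.mp (hCaD hvaCa)).1, vb,
      (Finset.mem_sdiff.mp (hCbD hvbCb)).1, ?_, ?_, hvasim, hvbsim⟩
    · intro h
      exact hdisj va hvaCa (h ▸ hvbCb)
    · exact fun h => cross va vb hvaCa hvbCb h


def PEOList (M : SimpleGraph V) : List V → Prop
  | [] => True
  | v :: l => (∀ p ∈ l, ∀ q ∈ l, M.Adj v p → M.Adj v q → p ≠ q → M.Adj p q) ∧ PEOList M l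

theorem exists_peo [DecidableEq V] : ∀ (n : ℕ) (A : Finset V), ChordalOn M A → A.card = n →
    ∃ l : List V, l.Nodup ∧ l.toFinset = A ∧ PEOList M l := by
  intro n
  induction n with
  | zero =>
    intro A _ hcard
    exact ⟨[], List.nodup_nil, by simpa using (Finset.card_eq_zero.mp hcard).symm, trivial⟩
  | succ n ih =>
    intro A hA hcard
    classical
    have hne : A.Nonempty := Finset.card_pos.mp (by omega)
    have hsimp : ∃ v ∈ A, SimplicialOn M A v := by
      rcases dirac_main n.succ A hA (le_of_eq hcard) with hclq | ⟨v, hv, _, _, _, _, hsv, _⟩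
      · obtain ⟨v, hv⟩ := hne
        exact ⟨v, hv, fun p hp q hq _ _ hpq => hclq p hp q hq hpq⟩
      · exact ⟨v, hv, hsv⟩
    obtain ⟨v, hv, hvs⟩ := hsimp
    have hcard' : (A.erase v).card = n := by
      have := Finset.card_erase_of_mem hv
      omega
    obtain ⟨l', hnd, htf, hpeo⟩ := ih (A.erase v) (hA.mono (Finset.erase_subset _ _)) hcard'
    refine ⟨v :: l', ?_, ?_, ?_, hpeo⟩
    · refine List.nodup_cons.mpr ⟨?_, hnd⟩
      intro h
      have : v ∈ A.erase v := htf ▸ List.mem_toFinset.mpr h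
      exact (Finset.mem_erase.mp this).1 rfl
    · rw [List.toFinset_cons, htf, Finset.insert_erase hv]
    · intro p hp q hq hvp hvq hpq
      have hp' : p ∈ A := (Finset.erase_subset _ _) (htf ▸ List.mem_toFinset.mpr hp)
      have hq' : q ∈ A := (Finset.erase_subset _ _) (htf ▸ List.mem_toFinset.mpr hq)
      exact hvs p hp' q hq' hvp hvq hpq

/-- Greedy coloring along a perfect elimination ordering. -/
theorem exists_coloring [DecidableEq V] (k : ℕ) (hclbd : ∀ s : Finset V, M.IsClique s → s.card ≤ k) :
    ∀ l : List V, l.Nodup → PEOList M l →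
    ∃ c : V → ℕ, (∀ v ∈ l, c v < k) ∧
      (∀ p ∈ l, ∀ q ∈ l, M.Adj p q → c p ≠ c q) := by
  intro l
  induction l with
  | nil => exact fun _ _ => ⟨fun _ => 0, by simp, by simp⟩
  | cons v l' ih =>
    intro hnd hpeo
    classical
    obtain ⟨hvl', hnd'⟩ := List.nodup_cons.mp hnd
    obtain ⟨c', hc'ran, hc'prop⟩ := ih hnd' hpeo.2
    set F := l'.toFinset.filter (fun u => M.Adj v u) with hF
    have hclq : M.IsClique (insert v F : Finset V) := by
      intro p hp q hq hpq
      rw [Finset.coe_insert, Set.mem_insert_iff, Finset.mem_coe] at hp hq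
      rcases hp with rfl | hp
      · rcases hq with rfl | hq
        · exact absurd rfl hpq
        · exact (Finset.mem_filter.mp hq).2
      · rcases hq with rfl | hq
        · exact (Finset.mem_filter.mp hp).2.symm
        · exact hpeo.1 p (List.mem_toFinset.mp (Finset.mem_filter.mp hp).1) q
            (List.mem_toFinset.mp (Finset.mem_filter.mp hq).1)
            (Finset.mem_filter.mp hp).2 (Finset.mem_filter.mp hq).2 hpq
    have hvF : v ∉ F := fun h => hvl' (List.mem_toFinset.mp (Finset.mem_filter.mp h).1)
    have hFcard : F.card + 1 ≤ k := by
      have h1 := hclbd _ hclq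
      have h2 : (insert v F).card = F.card + 1 := Finset.card_insert_of_notMem hvF
      omega
    have himg : ((F.image c').card : ℕ) < k := by
      have := Finset.card_image_le (s := F) (f := c')
      omega
    have hnonempty : (Finset.range k \ F.image c').Nonempty := by
      rw [← Finset.card_pos]
      have h1 : (Finset.range k ∩ F.image c').card ≤ (F.image c').card :=
        Finset.card_le_card Finset.inter_subset_right
      have h2 := Finset.card_sdiff_add_card_inter (Finset.range k) (F.image c')
      have hrk : (Finset.range k).card = k := Finset.card_range k
      omega
    obtain ⟨b, hb⟩ := hnonempty
    rw [Finset.mem_sdiff, Finset.mem_range] at hb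
    have hnev : ∀ u ∈ l', u ≠ v := by
      intro u hu h
      subst h
      exact hvl' hu
    refine ⟨Function.update c' v b, ?_, ?_⟩
    · intro u hu
      rcases List.mem_cons.mp hu with rfl | hu'
      · rw [Function.update_self]; exact hb.1
      · rw [Function.update_of_ne (hnev u hu')]
        exact hc'ran u hu'
    · intro p hp q hq hadj
      rcases List.mem_cons.mp hp with rfl | hp' <;> rcases List.mem_cons.mp hq with rfl | hq'
      · exact absurd hadj (M.irrefl)
      · rw [Function.update_self, Function.update_of_ne (hnev q hq')]
        intro hcon
        exact hb.2 (Finset.mem_image.mpr ⟨q, Finset.mem_filter.mpr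
          ⟨List.mem_toFinset.mpr hq', hadj⟩, hcon.symm⟩)
      · rw [Function.update_self, Function.update_of_ne (hnev p hp')]
        intro hcon
        exact hb.2 (Finset.mem_image.mpr ⟨p, Finset.mem_filter.mpr
          ⟨List.mem_toFinset.mpr hp', hadj.symm⟩, hcon⟩)
      · rw [Function.update_of_ne (hnev p hp'),
          Function.update_of_ne (hnev q hq')]
        exact hc'prop p hp' q hq' hadj


def BddLater {V : Type} (G : SimpleGraph V) [DecidableRel G.Adj] [DecidableEq V]
    (t : ℕ) : List V → Prop
  | [] => True
  | v :: l => (l.toFinset.filter (fun u => G.Adj v u)).card < t ∧ BddLater G t l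

theorem dp_greedy {W : Type} {G : SimpleGraph V} {H : SimpleGraph W} {L : V → Finset W}
    [DecidableRel G.Adj] [DecidableEq V] [Nonempty W]
    (cov : DPCover G H L) (t : ℕ) (hL : ∀ v, t ≤ (L v).card) :
    ∀ l : List V, l.Nodup → BddLater G t l →
    ∃ f : V → W, (∀ v ∈ l, f v ∈ L v) ∧ ∀ p ∈ l, ∀ q ∈ l, ¬ H.Adj (f p) (f q) := by
  intro l
  induction l with
  | nil => exact fun _ _ => ⟨fun _ => Classical.arbitrary W, by simp, by simp⟩
  | cons v l' ih =>
    intro hnd hbdd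
    classical
    obtain ⟨hvl', hnd'⟩ := List.nodup_cons.mp hnd
    obtain ⟨f, hf1, hf2⟩ := ih hnd' hbdd.2
    have hnev : ∀ u ∈ l', u ≠ v := by
      intro u hu h
      subst h
      exact hvl' hu
    set Nb := l'.toFinset.filter (fun u => G.Adj v u) with hNb
    set Blocked := (L v).filter (fun b => ∃ u ∈ Nb, H.Adj (f u) b) with hBl
    have hsub : Blocked ⊆ Nb.biUnion (fun u => (L v).filter (fun b => H.Adj (f u) b)) := by
      intro b hb
      obtain ⟨hbL, u, hu, hadj⟩ := Finset.mem_filter.mp hb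
      exact Finset.mem_biUnion.mpr ⟨u, hu, Finset.mem_filter.mpr ⟨hbL, hadj⟩⟩
    have hone : ∀ u ∈ Nb, ((L v).filter (fun b => H.Adj (f u) b)).card ≤ 1 := by
      intro u hu
      rw [Finset.card_le_one]
      intro b hb b' hb'
      have huv : G.Adj u v := ((Finset.mem_filter.mp hu).2).symm
      exact cov.matching huv (f u) (hf1 u (List.mem_toFinset.mp (Finset.mem_filter.mp hu).1))
        b (Finset.mem_filter.mp hb).1 b' (Finset.mem_filter.mp hb').1
        (Finset.mem_filter.mp hb).2 (Finset.mem_filter.mp hb').2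
    have hBlcard : Blocked.card < t := by
      have h1 := Finset.card_le_card hsub
      have h2 := Finset.card_biUnion_le (s := Nb)
        (t := fun u => (L v).filter (fun b => H.Adj (f u) b))
      have h3 : ∑ u ∈ Nb, ((L v).filter (fun b => H.Adj (f u) b)).card ≤ ∑ _u ∈ Nb, 1 :=
        Finset.sum_le_sum hone
      rw [Finset.sum_const, smul_eq_mul, mul_one] at h3
      have h4 : Nb.card < t := hbdd.1
      omega
    have hfree : ((L v) \ Blocked).Nonempty := by
      rw [← Finset.card_pos]
      have h5 : ((L v) \ Blocked).card = (L v).card - Blocked.card :=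
        Finset.card_sdiff_of_subset (Finset.filter_subset _ _)
      have hL' := hL v
      omega
    obtain ⟨b, hb⟩ := hfree
    rw [Finset.mem_sdiff] at hb
    have hnadj : ∀ u ∈ l', ¬ H.Adj b (f u) ∧ ¬ H.Adj (f u) b := by
      intro u hu
      by_cases hGadj : G.Adj v u
      · have hmain : ¬ H.Adj (f u) b := by
          intro h
          exact hb.2 (Finset.mem_filter.mpr ⟨hb.1,
            ⟨u, Finset.mem_filter.mpr ⟨List.mem_toFinset.mpr hu, hGadj⟩, h⟩⟩)
        exact ⟨fun h => hmain h.symm, hmain⟩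
      · have h1 : ¬ H.Adj b (f u) :=
          cov.nonadj (hnev u hu).symm hGadj b hb.1 (f u) (hf1 u hu)
        have h2 : ¬ H.Adj (f u) b :=
          cov.nonadj (hnev u hu) (fun h => hGadj h.symm) (f u) (hf1 u hu) b hb.1
        exact ⟨h1, h2⟩
    refine ⟨Function.update f v b, ?_, ?_⟩
    · intro u hu
      rcases List.mem_cons.mp hu with rfl | hu'
      · rw [Function.update_self]; exact hb.1
      · rw [Function.update_of_ne (hnev u hu')]; exact hf1 u hu'
    · intro p hp q hq
      rcases List.mem_cons.mp hp with rfl | hp' <;> rcases List.mem_cons.mp hq with rfl | hq'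
      · rw [Function.update_self]; exact H.irrefl
      · rw [Function.update_self, Function.update_of_ne (hnev q hq')]
        exact (hnadj q hq').1
      · rw [Function.update_of_ne (hnev p hp'), Function.update_self]
        exact (hnadj p hp').2
      · rw [Function.update_of_ne (hnev p hp'), Function.update_of_ne (hnev q hq')]
        exact hf2 p hp' q hq'

theorem bddlater_of_peo {G : SimpleGraph V} [DecidableRel G.Adj] [DecidableEq V]
    (hle : G ≤ M) (t : ℕ) (T : Finset ℕ) (hT : T.card = t) (c : V → ℕ) :
    ∀ l : List V, l.Nodup → PEOList M l →
    (∀ p ∈ l, ∀ q ∈ l, M.Adj p q → c p ≠ c q) →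
    BddLater G t (l.filter (fun v => c v ∈ T)) := by
  intro l
  induction l with
  | nil => intro _ _ _; simp only [List.filter_nil]; trivial
  | cons v l' ih =>
    intro hnd hpeo hprop
    obtain ⟨hvl', hnd'⟩ := List.nodup_cons.mp hnd
    have ihres := ih hnd' hpeo.2 (fun p hp q hq h =>
      hprop p (List.mem_cons_of_mem _ hp) q (List.mem_cons_of_mem _ hq) h)
    by_cases hcv : c v ∈ T
    · rw [List.filter_cons_of_pos (by simpa using hcv)]
      refine ⟨?_, ihres⟩
      set F := (l'.filter (fun v => c v ∈ T)).toFinset.filter (fun u => G.Adj v u) with hFdef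
      have hmemF : ∀ u ∈ F, u ∈ l' ∧ c u ∈ T ∧ M.Adj v u := by
        intro u hu
        obtain ⟨hu1, hu2⟩ := Finset.mem_filter.mp hu
        have := List.mem_toFinset.mp hu1
        rw [List.mem_filter] at this
        exact ⟨this.1, by simpa using this.2, hle hu2⟩
      have hinj : Set.InjOn c F := by
        intro p hp q hq hpq
        by_contra hne
        obtain ⟨hp1, hp2, hp3⟩ := hmemF p hp
        obtain ⟨hq1, hq2, hq3⟩ := hmemF q hq
        exact hprop p (List.mem_cons_of_mem _ hp1) q (List.mem_cons_of_mem _ hq1)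
          (hpeo.1 p hp1 q hq1 hp3 hq3 hne) hpq
      have himage : F.image c ⊆ T.erase (c v) := by
        intro i hi
        obtain ⟨u, hu, rfl⟩ := Finset.mem_image.mp hi
        obtain ⟨hu1, hu2, hu3⟩ := hmemF u hu
        refine Finset.mem_erase.mpr ⟨?_, hu2⟩
        exact fun h => hprop v (List.mem_cons_self) u (List.mem_cons_of_mem _ hu1) hu3 h.symm
      have h1 : F.card = (F.image c).card := (Finset.card_image_of_injOn hinj).symm
      have h2 := Finset.card_le_card himage
      have h3 : (T.erase (c v)).card = t - 1 := by rw [Finset.card_erase_of_mem hcv, hT]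
      have ht1 : 1 ≤ t := hT ▸ Finset.card_pos.mpr ⟨c v, hcv⟩
      omega
    · rw [List.filter_cons_of_neg (by simpa using hcv)]
      exact ihres

theorem top_classes {ι : Type} [DecidableEq ι] (K : Finset ι) (f : ι → ℕ) (t : ℕ)
    (ht : t ≤ K.card) :
    ∃ T ⊆ K, T.card = t ∧ t * ∑ i ∈ K, f i ≤ K.card * ∑ i ∈ T, f i := by
  have main : ∀ (m : ℕ), m ≤ K.card →
      ∃ T ⊆ K, T.card = m ∧ ∀ y ∈ K \ T, ∀ z ∈ T, f y ≤ f z := by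
    intro m
    induction m with
    | zero => exact fun _ => ⟨∅, Finset.empty_subset _, rfl, by simp⟩
    | succ m ihm =>
      intro hm
      obtain ⟨T, hTK, hTc, hTp⟩ := ihm (by omega)
      have hne : (K \ T).Nonempty := by
        rw [← Finset.card_pos, Finset.card_sdiff_of_subset hTK]; omega
      obtain ⟨x, hx, hxmax⟩ := Finset.exists_max_image (K \ T) f hne
      have hxT : x ∉ T := (Finset.mem_sdiff.mp hx).2
      refine ⟨insert x T, Finset.insert_subset (Finset.mem_sdiff.mp hx).1 hTK, ?_, ?_⟩
      · rw [Finset.card_insert_of_notMem hxT, hTc]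
      · intro y hy z hz
        have hy' : y ∈ K \ T := by
          rcases Finset.mem_sdiff.mp hy with ⟨hyK, hyT⟩
          exact Finset.mem_sdiff.mpr ⟨hyK, fun h => hyT (Finset.mem_insert_of_mem h)⟩
        rcases Finset.mem_insert.mp hz with rfl | hz'
        · exact hxmax y hy'
        · exact hTp y hy' z hz'
  obtain ⟨T, hTK, hTc, hTp⟩ := main t ht
  refine ⟨T, hTK, hTc, ?_⟩
  have hy : ∀ y ∈ K \ T, t * f y ≤ ∑ i ∈ T, f i := by
    intro y hy
    calc t * f y = ∑ _z ∈ T, f y := by rw [Finset.sum_const, hTc, smul_eq_mul]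
    _ ≤ ∑ z ∈ T, f z := Finset.sum_le_sum (fun z hz => hTp y hy z hz)
  have h2 : t * ∑ y ∈ K \ T, f y ≤ (K.card - t) * ∑ i ∈ T, f i := by
    rw [Finset.mul_sum]
    calc ∑ y ∈ K \ T, t * f y ≤ ∑ _y ∈ K \ T, ∑ i ∈ T, f i := Finset.sum_le_sum hy
    _ = (K \ T).card * ∑ i ∈ T, f i := by rw [Finset.sum_const, smul_eq_mul]
    _ = (K.card - t) * ∑ i ∈ T, f i := by rw [Finset.card_sdiff_of_subset hTK, hTc]
  have h3 : ∑ i ∈ K \ T, f i + ∑ i ∈ T, f i = ∑ i ∈ K, f i := Finset.sum_sdiff hTK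
  have h4 : t + (K.card - t) = K.card := Nat.add_sub_cancel' ht
  set S := ∑ i ∈ T, f i
  set Sc := ∑ y ∈ K \ T, f y
  calc t * ∑ i ∈ K, f i = t * S + t * Sc := by rw [← h3]; ring
  _ ≤ t * S + (K.card - t) * S := by omega
  _ = (t + (K.card - t)) * S := by ring
  _ = K.card * S := by rw [h4]


end DPNice

/-- If there is a chordal graph `M` on the same vertex set as `G` with `E(G) ⊆ E(M)` and
`ω(M) = χ_DP(G)` (i.e. `χ_DP(G) = tw(G) + 1`), then `G` is partially DP-nice. -/
theorem partiallyDPNice_of_chiDP_eq_treewidth_succ {V : Type} [Fintype V]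
    (G : SimpleGraph V) (M : SimpleGraph V) (hM : IsChordalGraph M) (hle : G ≤ M)
    (hclique : M.cliqueNum = chiDP G) : PartiallyDPNice G := by
  classical
  intro t ht1 ht2
  rcases isEmpty_or_nonempty V with hV | hV
  · have hc0 : Fintype.card V = 0 := Fintype.card_eq_zero
    rw [hc0]
    simp
  obtain ⟨v0⟩ := hV
  set k := chiDP G with hk
  set n := Fintype.card V with hn
  have hk1 : 1 ≤ k := by
    rw [← hclique]
    have hclq : M.IsClique ({v0} : Finset V) := by
      rw [Finset.coe_singleton]
      exact Set.pairwise_singleton v0 M.Adj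
    have h1 := hclq.card_le_cliqueNum
    simpa using h1
  have hchord : DPNice.ChordalOn M Finset.univ := fun v c hc hl _ => hM c hc hl
  obtain ⟨l, hlnd, hltf, hlpeo⟩ :=
    DPNice.exists_peo (M := M) (Fintype.card V) Finset.univ hchord Finset.card_univ
  have hclbd : ∀ s : Finset V, M.IsClique s → s.card ≤ k :=
    fun s hs => hclique ▸ hs.card_le_cliqueNum
  obtain ⟨c, hcran, hcprop⟩ := DPNice.exists_coloring (M := M) k hclbd l hlnd hlpeo
  have hmeml : ∀ v : V, v ∈ l := fun v =>
    List.mem_toFinset.mp (by rw [hltf]; exact Finset.mem_univ v)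
  have hcineq : ∀ v : V, c v ∈ Finset.range k := fun v =>
    Finset.mem_range.mpr (hcran v (hmeml v))
  set f : ℕ → ℕ := fun i => (Finset.univ.filter (fun v => c v = i)).card with hf
  have hsum : ∑ i ∈ Finset.range k, f i = n := by
    rw [hn, ← Finset.card_univ]
    exact (Finset.card_eq_sum_card_fiberwise (fun v _ => hcineq v)).symm
  obtain ⟨T, hTK, hTc, hTineq⟩ := DPNice.top_classes (Finset.range k) f t
    (by rw [Finset.card_range]; exact ht2)
  set U := Finset.univ.filter (fun v => c v ∈ T) with hU
  have hUcard : U.card = ∑ i ∈ T, f i := by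
    rw [hU, Finset.card_eq_sum_card_fiberwise
      (f := c) (s := Finset.univ.filter (fun v => c v ∈ T)) (t := T) (fun v hv => (Finset.mem_filter.mp hv).2)]
    refine Finset.sum_congr rfl ?_
    intro i hi
    congr 1
    ext v
    simp only [Finset.mem_filter, Finset.mem_univ, true_and]
    constructor
    · rintro ⟨_, h2⟩; exact h2
    · intro h; exact ⟨by rw [h]; exact hi, h⟩
  have hUn : t * n ≤ k * U.card := by
    rw [hUcard]
    calc t * n = t * ∑ i ∈ Finset.range k, f i := by rw [hsum]
    _ ≤ (Finset.range k).card * ∑ i ∈ T, f i := hTineq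
    _ = k * ∑ i ∈ T, f i := by rw [Finset.card_range]
  have key : ∀ (Wt : Type) (instW : Fintype Wt) (H : SimpleGraph Wt) (L : V → Finset Wt),
      DPCover G H L → (∀ v, (L v).card = t) → U.card ≤ _root_.indepNum H := by
    intro Wt instW H L cov hcards
    have hWne : Nonempty Wt := by
      have hpos : 0 < (L v0).card := by rw [hcards v0]; omega
      obtain ⟨w, _⟩ := Finset.card_pos.mp hpos
      exact ⟨w⟩
    set lU := l.filter (fun v => decide (c v ∈ T)) with hlU
    have hlUnd : lU.Nodup := hlnd.filter _
    have hbdd : DPNice.BddLater G t lU :=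
      DPNice.bddlater_of_peo (M := M) hle t T hTc c l hlnd hlpeo hcprop
    obtain ⟨fc, hfc1, hfc2⟩ := DPNice.dp_greedy cov t
      (fun v => le_of_eq (hcards v).symm) lU hlUnd hbdd
    have hmemU2lU : ∀ v ∈ U, v ∈ lU := by
      intro v hv
      rw [hlU, List.mem_filter]
      exact ⟨hmeml v, by simpa using (Finset.mem_filter.mp hv).2⟩
    set S := U.image fc with hS
    have hinj : Set.InjOn fc U := by
      intro p hp q hq hpq
      obtain ⟨vv, hvv, huniq⟩ := cov.partition (fc p)
      have h1 : p = vv := huniq p (hfc1 p (hmemU2lU p hp))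
      have h2 : q = vv := huniq q (by rw [hpq]; exact hfc1 q (hmemU2lU q hq))
      rw [h1, h2]
    have hSind : IsIndepFinset H S := by
      intro a ha b hb
      obtain ⟨p, hp, rfl⟩ := Finset.mem_image.mp ha
      obtain ⟨q, hq, rfl⟩ := Finset.mem_image.mp hb
      exact hfc2 p (hmemU2lU p hp) q (hmemU2lU q hq)
    have hScard : S.card = U.card := Finset.card_image_of_injOn hinj
    have hbdd2 : BddAbove {m : ℕ | ∃ S : Finset Wt, IsIndepFinset H S ∧ S.card = m} := by
      refine ⟨Fintype.card Wt, ?_⟩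
      rintro m ⟨S', _, rfl⟩
      rw [← Finset.card_univ]
      exact Finset.card_le_univ S'
    rw [_root_.indepNum]
    exact le_csSup hbdd2 ⟨S, hSind, hScard⟩
  have h𝒜ne : Set.Nonempty {m : ℕ | ∃ (Wt : Type) (_ : Fintype Wt) (H : SimpleGraph Wt)
      (L : V → Finset Wt), DPCover G H L ∧ (∀ v, (L v).card = t) ∧ _root_.indepNum H = m} := by
    refine ⟨_, V × Fin t, inferInstance, SimpleGraph.fromRel (fun x y => x.1 = y.1),
      fun v => ({v} : Finset V) ×ˢ Finset.univ, ⟨?_, ?_, ?_, ?_⟩, ?_, rfl⟩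
    · intro w
      refine ⟨w.1, Finset.mem_product.mpr ⟨Finset.mem_singleton_self _, Finset.mem_univ _⟩, ?_⟩
      intro v hv
      exact (Finset.mem_singleton.mp (Finset.mem_product.mp hv).1).symm
    · intro v a ha b hb hne
      have ha1 : a.1 = v := Finset.mem_singleton.mp (Finset.mem_product.mp ha).1
      have hb1 : b.1 = v := Finset.mem_singleton.mp (Finset.mem_product.mp hb).1
      exact (SimpleGraph.fromRel_adj _ _ _).mpr ⟨hne, Or.inl (ha1.trans hb1.symm)⟩
    · intro u v huv a ha b hb b' hb' hadj hadj'
      exfalso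
      have ha1 : a.1 = u := Finset.mem_singleton.mp (Finset.mem_product.mp ha).1
      have hb1 : b.1 = v := Finset.mem_singleton.mp (Finset.mem_product.mp hb).1
      rcases ((SimpleGraph.fromRel_adj _ _ _).mp hadj).2 with h | h
      · exact huv.ne (by rw [← ha1, h, hb1])
      · exact huv.ne (by rw [← ha1, ← h, hb1])
    · intro u v hne hnadj a ha b hb hadj
      have ha1 : a.1 = u := Finset.mem_singleton.mp (Finset.mem_product.mp ha).1
      have hb1 : b.1 = v := Finset.mem_singleton.mp (Finset.mem_product.mp hb).1
      rcases ((SimpleGraph.fromRel_adj _ _ _).mp hadj).2 with h | h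
      · exact hne (by rw [← ha1, h, hb1])
      · exact hne (by rw [← ha1, ← h, hb1])
    · intro v
      rw [Finset.card_product, Finset.card_singleton, one_mul, Finset.card_univ,
        Fintype.card_fin]
  have hmem : alphaDP G t ∈ _ := Nat.sInf_mem h𝒜ne
  obtain ⟨Wt, instW, H, L, cov, hcards, hind⟩ := hmem
  have hfinal : U.card ≤ alphaDP G t := by
    rw [← hind]
    exact key Wt instW H L cov hcards
  have hkpos : (0 : ℚ) < (k : ℚ) := by exact_mod_cast hk1
  rw [div_le_iff₀ hkpos]
  have hfin2 : t * n ≤ alphaDP G t * k := by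
    calc t * n ≤ k * U.card := hUn
    _ ≤ k * alphaDP G t := Nat.mul_le_mul_left k hfinal
    _ = alphaDP G t * k := Nat.mul_comm _ _
  exact_mod_cast hfin2
end
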